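/- arXiv:2004.01844 — 8 statements merged into one kernel-verified Lean document; each statement's English description precedes it below -/
import Mathlib

section
/- Let R be a noetherian commutative ring and M a finitely generated R-module. Then the zeroth Fitting ideal of M is contained in the characteristic ideal of M, where the characteristic ideal char_R(M) is defined as the image of the map ⋂^s_R N → ⋂^s_R R^s = R induced by any exact sequence 0 → N → R^s → M → 0 (with ⋂^r_R M := ((⋀^r_R Hom_R(M,R))^* denoting the r-th exterior bi-dual). -/
open Module

section Defs
variable (R : Type*) [CommRing R]

/-- The `r`-th exterior bi-dual `⋂^r_R M := (⋀^r_R (M^*))^*`, realized canonically as the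
module of alternating `R`-multilinear forms on `r` copies of the dual module `M^*`. -/
abbrev ExtBidual (M : Type*) [AddCommGroup M] [Module R M] (r : ℕ) :=
  (Module.Dual R M) [⋀^Fin r]→ₗ[R] R

/-- Functoriality of the exterior bi-dual. -/
noncomputable def extBidualMap {M N : Type*} [AddCommGroup M] [Module R M]
    [AddCommGroup N] [Module R N] (r : ℕ) (f : M →ₗ[R] N) :
    ExtBidual R M r →ₗ[R] ExtBidual R N r where
  toFun φ := φ.compLinearMap f.dualMap
  map_add' := by intros; ext; rfl
  map_smul' := by intros; ext; rfl

/-- The canonical identification `⋂^s_R (R^s) = R`, given by evaluation at the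
standard dual basis. -/
noncomputable def extEval (s : ℕ) : ExtBidual R (Fin s → R) s →ₗ[R] R where
  toFun φ := φ (fun i => LinearMap.proj i)
  map_add' := by intros; rfl
  map_smul' := by intros; rfl

/-- The characteristic ideal of `M` computed from a presentation `0 → N → R^s → M → 0`
with kernel `N`: the image of the induced map `⋂^s_R N → ⋂^s_R R^s = R`. -/
noncomputable def charIdealAux (s : ℕ) (N : Submodule R (Fin s → R)) : Ideal R :=
  LinearMap.range ((extEval R s) ∘ₗ (extBidualMap R s N.subtype))

/-- The zeroth Fitting ideal of `M` computed from a presentation `0 → N → R^s → M → 0`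
with kernel `N`: the ideal generated by determinants of `s × s` matrices with columns in `N`. -/
def fittIdealAux (s : ℕ) (N : Submodule R (Fin s → R)) : Ideal R :=
  Ideal.span { x | ∃ v : Fin s → (Fin s → R), (∀ i, v i ∈ N) ∧ x = (Matrix.of v).det }
end Defs

/-- Over a noetherian ring, the zeroth Fitting ideal of a finitely generated module is
contained in its characteristic ideal (computed from any presentation `0 → N → R^s → M → 0`). -/
theorem fitt_le_char (R : Type*) [CommRing R] [IsNoetherianRing R]
    (M : Type*) [AddCommGroup M] [Module R M] [Module.Finite R M]
    (s : ℕ) (hs : 0 < s) (π : (Fin s → R) →ₗ[R] M) (hπ : Function.Surjective π) :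
    fittIdealAux R s (LinearMap.ker π) ≤ charIdealAux R s (LinearMap.ker π) := by
  set N := LinearMap.ker π
  rw [fittIdealAux, Ideal.span_le]
  rintro x ⟨v, hv, rfl⟩
  let g : Module.Dual R N →ₗ[R] (Fin s → R) :=
    { toFun := fun f j => f ⟨v j, hv j⟩
      map_add' := by intros; ext j; simp
      map_smul' := by intros; ext j; simp }
  refine ⟨(Matrix.detRowAlternating (R := R) (n := Fin s)).compLinearMap g, ?_⟩
  show Matrix.detRowAlternating
      (fun i => g (N.subtype.dualMap (LinearMap.proj i))) = (Matrix.of v).det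
  have : (fun i => g (N.subtype.dualMap (LinearMap.proj i))) = (Matrix.of v).transpose := by
    ext i j
    rfl
  rw [this]
  show ((Matrix.of v).transpose).det = (Matrix.of v).det
  rw [Matrix.det_transpose]
end

section
/- Let R be a noetherian commutative ring and M a finitely generated R-module whose projective dimension is at most 1. Then the zeroth Fitting ideal of M equals the characteristic ideal of M. -/
open Module

section AuxLemmas

variable {R : Type*} [CommRing R]


open Finset in
lemma alt_apply_mem_span_det {n s : ℕ} (ψ : (Fin n → R) [⋀^Fin s]→ₗ[R] R)
    (U : Fin s → Fin n → R) :
    ψ U ∈ Ideal.span {x | ∃ k : Fin s → Fin n,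
      x = Matrix.det (Matrix.of fun i j => U i (k j))} := by
  classical
  set e : Fin n → (Fin n → R) := fun j => Pi.single j (1 : R) with he
  set F : (Fin s → Fin n) → R :=
    fun r => (∏ i, U i (r i)) • ψ (fun i => e (r i)) with hF
  have expand : ψ U = ∑ r : Fin s → Fin n, F r := by
    have hU : U = fun i => ∑ j : Fin n, U i j • e j := by
      funext i j'
      simp [he, Pi.single_apply]
    calc ψ U = ψ (fun i => ∑ j : Fin n, U i j • e j) := by rw [← hU]
    _ = ∑ r : Fin s → Fin n, ψ (fun i => U i (r i) • e (r i)) :=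
        ψ.toMultilinearMap.map_sum (fun i j => U i j • e j)
    _ = ∑ r : Fin s → Fin n, F r := by
        refine Finset.sum_congr rfl fun r _ => ?_
        exact ψ.toMultilinearMap.map_smul_univ (fun i => U i (r i)) (fun i => e (r i))
  rw [expand]
  have hzero : ∀ r : Fin s → Fin n, ¬ Function.Injective r → F r = 0 := by
    intro r hr
    obtain ⟨i, j, heq, hne⟩ := Function.not_injective_iff.mp hr
    have : ψ (fun i => e (r i)) = 0 :=
      ψ.map_eq_zero_of_eq _ (by rw [heq]) hne
    simp [hF, this]
  rw [← Finset.sum_filter_of_ne (p := fun r => Function.Injective r)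
    (fun r _ hF0 => by by_contra h; exact hF0 (hzero r h))]
  rw [← Finset.sum_fiberwise_of_maps_to (t := Finset.univ.powersetCard s)
    (g := fun r : Fin s → Fin n => Finset.image r Finset.univ)
    (fun r hr => by
      rw [Finset.mem_filter] at hr
      rw [Finset.mem_powersetCard_univ, Finset.card_image_of_injective _ hr.2]
      simp) F]
  refine Ideal.sum_mem _ fun A hA => ?_
  rw [Finset.mem_powersetCard_univ] at hA
  set m : Fin s → Fin n := fun i => A.orderEmbOfFin hA i with hm
  have hminj : Function.Injective m := (A.orderEmbOfFin hA).injective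
  have himA : Finset.image m Finset.univ = A := by
    apply Finset.coe_injective
    rw [Finset.coe_image, Finset.coe_univ, Set.image_univ]
    exact A.range_orderEmbOfFin hA
  have hbij : ∑ r ∈ ((Finset.univ.filter fun r : Fin s → Fin n =>
        Function.Injective r).filter fun r => Finset.image r Finset.univ = A), F r
      = ∑ σ : Equiv.Perm (Fin s), F (m ∘ σ) := by
    refine (Finset.sum_bij (fun (σ : Equiv.Perm (Fin s)) _ => m ∘ σ) ?_ ?_ ?_ ?_).symm
    · intro σ _
      rw [Finset.mem_filter, Finset.mem_filter]
      refine ⟨⟨Finset.mem_univ _, hminj.comp σ.injective⟩, ?_⟩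
      have h1 : Finset.image (m ∘ σ) Finset.univ
          = Finset.image m (Finset.image (⇑σ) Finset.univ) := by
        rw [Finset.image_image]
      rw [h1, Finset.image_univ_equiv, himA]
    · intro σ₁ _ σ₂ _ h
      exact Equiv.ext fun i => hminj (congrFun h i)
    · intro r hr
      rw [Finset.mem_filter, Finset.mem_filter] at hr
      obtain ⟨⟨-, hrinj⟩, hrim⟩ := hr
      have hri : ∀ i, r i ∈ A := fun i => by
        rw [← hrim]; exact Finset.mem_image_of_mem r (Finset.mem_univ i)
      set g : Fin s → Fin s := fun i => (A.orderIsoOfFin hA).symm ⟨r i, hri i⟩ with hg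
      have hginj : Function.Injective g := by
        intro a b hab
        apply hrinj
        have := congrArg (fun z => ((A.orderIsoOfFin hA) z : Fin n)) hab
        simpa [hg] using this
      refine ⟨Equiv.ofBijective g (Finite.injective_iff_bijective.mp hginj),
        Finset.mem_univ _, ?_⟩
      funext i
      show m (g i) = r i
      have h2 : m (g i) = ((A.orderIsoOfFin hA) (g i) : Fin n) :=
        (A.coe_orderIsoOfFin_apply hA (g i)).symm
      rw [h2, hg]
      simp
    · intro σ _; rfl
  rw [hbij]
  have hterm : ∀ σ : Equiv.Perm (Fin s), F (m ∘ σ)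
      = (((Equiv.Perm.sign σ : ℤ) : R) * ∏ i, U i (m (σ i)))
        * ψ (fun i => e (m i)) := by
    intro σ
    have h1 : (fun i => e ((m ∘ σ) i)) = (fun i => e (m i)) ∘ σ := rfl
    rw [hF]
    show (∏ i, U i (m (σ i))) • ψ (fun i => e ((m ∘ σ) i)) = _
    rw [h1, ψ.map_perm]
    simp only [Units.smul_def, zsmul_eq_mul, smul_eq_mul]
    ring
  rw [Finset.sum_congr rfl fun σ _ => hterm σ, ← Finset.sum_mul]
  have hsum : (∑ σ : Equiv.Perm (Fin s),
      ((Equiv.Perm.sign σ : ℤ) : R) * ∏ i, U i (m (σ i)))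
      = Matrix.det (Matrix.of fun i j => U i (m j)) := by
    rw [← Matrix.det_transpose, Matrix.det_apply']
    rfl
  rw [hsum]
  exact Ideal.mul_mem_right _ _ (Ideal.subset_span ⟨m, rfl⟩)


lemma exists_dual_pair (N : Type*) [AddCommGroup N] [Module R N]
    [Module.Finite R N] [Module.Projective R N] :
    ∃ (n : ℕ) (x : Fin n → N) (f : Fin n → Module.Dual R N),
      ∀ y : N, ∑ j, f j y • x j = y := by
  classical
  obtain ⟨n, p, g, hp, -, hpg⟩ := Module.Finite.exists_comp_eq_id_of_projective R N
  refine ⟨n, fun j => p (Pi.single j 1), fun j => (LinearMap.proj j).comp g, fun y => ?_⟩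
  have h1 : ∑ j, (g y j) • p (Pi.single j (1 : R))
      = p (∑ j, g y j • (Pi.single j (1 : R) : Fin n → R)) := by
    rw [map_sum]
    exact Finset.sum_congr rfl fun j _ => (p.map_smul _ _).symm
  have h2 : (∑ j, g y j • (Pi.single j (1 : R) : Fin n → R)) = g y := by
    funext j'
    simp [Pi.single_apply]
  show ∑ j, (g y j) • p (Pi.single j (1 : R)) = y
  rw [h1, h2, ← LinearMap.comp_apply, hpg, LinearMap.id_apply]


lemma projective_ker_of_projective_ker {M : Type*} [AddCommGroup M] [Module R M]
    {s t : ℕ} (π : (Fin s → R) →ₗ[R] M) (hπ : Function.Surjective π)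
    (ρ : (Fin t → R) →ₗ[R] M) (hρ : Function.Surjective ρ)
    (hP : Module.Projective R (LinearMap.ker ρ)) :
    Module.Projective R (LinearMap.ker π) := by
  classical
  set A := Fin s → R with hA
  set B := Fin t → R with hB
  set q : (A × B) →ₗ[R] M := π ∘ₗ LinearMap.fst R A B - ρ ∘ₗ LinearMap.snd R A B with hq
  set X : Submodule R (A × B) := LinearMap.ker q with hX
  have memX : ∀ z : A × B, z ∈ X ↔ π z.1 = ρ z.2 := fun z => by
    rw [hX, LinearMap.mem_ker, hq]
    simp [sub_eq_zero]
  set fst' : X →ₗ[R] A := (LinearMap.fst R A B) ∘ₗ X.subtype with hfst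
  set snd' : X →ₗ[R] B := (LinearMap.snd R A B) ∘ₗ X.subtype with hsnd
  have hfst_surj : Function.Surjective fst' := fun a => by
    obtain ⟨b, hb⟩ := hρ (π a)
    exact ⟨⟨(a, b), (memX _).mpr hb.symm⟩, rfl⟩
  have hsnd_surj : Function.Surjective snd' := fun b => by
    obtain ⟨a, ha⟩ := hπ (ρ b)
    exact ⟨⟨(a, b), (memX _).mpr ha⟩, rfl⟩
  obtain ⟨σ₁, hσ₁⟩ := fst'.exists_rightInverse_of_surjective
    (LinearMap.range_eq_top.mpr hfst_surj)
  obtain ⟨σ₂, hσ₂⟩ := snd'.exists_rightInverse_of_surjective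
    (LinearMap.range_eq_top.mpr hsnd_surj)
  have hσ₁' : ∀ a, fst' (σ₁ a) = a := fun a => by
    have := LinearMap.ext_iff.mp hσ₁ a; simpa using this
  have hσ₂' : ∀ b, snd' (σ₂ b) = b := fun b => by
    have := LinearMap.ext_iff.mp hσ₂ b; simpa using this
  -- `ker fst'` is isomorphic to `ker ρ`, hence projective
  set T1 : LinearMap.ker fst' →ₗ[R] LinearMap.ker ρ :=
    LinearMap.codRestrict (LinearMap.ker ρ)
      ((LinearMap.snd R A B) ∘ₗ X.subtype ∘ₗ (LinearMap.ker fst').subtype)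
      (fun z => by
        have h1 : ((z : X) : A × B).1 = 0 := z.2
        have h2 := (memX ((z : X) : A × B)).mp (z : X).2
        rw [h1, map_zero] at h2
        exact LinearMap.mem_ker.mpr h2.symm) with hT1
  set T2 : LinearMap.ker ρ →ₗ[R] LinearMap.ker fst' :=
    LinearMap.codRestrict (LinearMap.ker fst')
      (LinearMap.codRestrict X ((LinearMap.inr R A B) ∘ₗ (LinearMap.ker ρ).subtype)
        (fun b => by rw [memX]; simp [LinearMap.mem_ker.mp b.2]))
      (fun b => by
        apply LinearMap.mem_ker.mpr
        rfl) with hT2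
  have hker_fst : Module.Projective R (LinearMap.ker fst') := by
    refine Module.Projective.of_split T1 T2 ?_
    refine LinearMap.ext fun z => ?_
    have h1 : ((z : X) : A × B).1 = 0 := z.2
    apply Subtype.ext; apply Subtype.ext
    show ((0 : A), ((z : X) : A × B).2) = ((z : X) : A × B)
    exact Prod.ext h1.symm rfl
  -- `X` is projective
  haveI : Module.Projective R A := inferInstance
  have hXproj : Module.Projective R X := by
    refine Module.Projective.of_split
      (M := LinearMap.ker fst' × A)
      (LinearMap.prod
        (LinearMap.codRestrict (LinearMap.ker fst') (LinearMap.id - σ₁ ∘ₗ fst')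
          (fun x => by
            apply LinearMap.mem_ker.mpr
            simp [hσ₁']))
        fst')
      ((LinearMap.ker fst').subtype ∘ₗ (LinearMap.fst R _ _) + σ₁ ∘ₗ (LinearMap.snd R _ _)) ?_
    refine LinearMap.ext fun x => ?_
    show (x - σ₁ (fst' x)) + σ₁ (fst' x) = x
    abel
  -- `ker π` is a direct summand of `X`
  set u : LinearMap.ker π →ₗ[R] X :=
    LinearMap.codRestrict X ((LinearMap.inl R A B) ∘ₗ (LinearMap.ker π).subtype)
      (fun y => by rw [memX]; simp [LinearMap.mem_ker.mp y.2]) with hu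
  set w : (X : Submodule R (A × B)) →ₗ[R] X := LinearMap.id - σ₂ ∘ₗ snd' with hw
  set v : X →ₗ[R] LinearMap.ker π :=
    LinearMap.codRestrict (LinearMap.ker π)
      ((LinearMap.fst R A B) ∘ₗ X.subtype ∘ₗ w)
      (fun x => by
        apply LinearMap.mem_ker.mpr
        have h2 : snd' (w x) = 0 := by
          rw [hw]
          simp [hσ₂']
        have h2' : ((w x : X) : A × B).2 = 0 := h2
        have h3 := (memX ((w x : X) : A × B)).mp
          (w x : X).2
        rw [h2', map_zero] at h3
        exact h3) with hv
  refine Module.Projective.of_split u v ?_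
  refine LinearMap.ext fun y => ?_
  apply Subtype.ext
  show ((w (u y) : X) : A × B).1 = (y : A)
  have h1 : snd' (u y) = 0 := rfl
  have h2 : w (u y) = u y := by
    rw [hw, LinearMap.sub_apply, LinearMap.id_apply, LinearMap.comp_apply, h1, map_zero, sub_zero]
  rw [h2]
  rfl

end AuxLemmas

/-- Over a noetherian ring, if a finitely generated module has projective dimension at most `1`
(i.e. it admits a presentation `0 → P → R^t → M → 0` with `P` projective), then its zeroth
Fitting ideal equals its characteristic ideal. -/
theorem fitt_eq_char_of_pd_le_one (R : Type*) [CommRing R] [IsNoetherianRing R]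
    (M : Type*) [AddCommGroup M] [Module R M] [Module.Finite R M]
    (hpd : ∃ (t : ℕ) (ρ : (Fin t → R) →ₗ[R] M), Function.Surjective ρ ∧
      Module.Projective R (LinearMap.ker ρ))
    (s : ℕ) (hs : 0 < s) (π : (Fin s → R) →ₗ[R] M) (hπ : Function.Surjective π) :
    fittIdealAux R s (LinearMap.ker π) = charIdealAux R s (LinearMap.ker π) := by
  classical
  set N := LinearMap.ker π with hN
  apply le_antisymm
  · -- Fitting ideal ⊆ characteristic ideal (always true)
    rw [fittIdealAux, Ideal.span_le]
    rintro x ⟨v, hv, rfl⟩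
    set vN : Fin s → N := fun i => ⟨v i, hv i⟩ with hvN
    set E : Module.Dual R N →ₗ[R] (Fin s → R) :=
      LinearMap.pi (fun i => LinearMap.applyₗ (vN i)) with hE
    set φ : ExtBidual R N s := Matrix.detRowAlternating.compLinearMap E with hφ
    refine LinearMap.mem_range.mpr ⟨φ, ?_⟩
    show φ (fun i => N.subtype.dualMap (LinearMap.proj i)) = (Matrix.of v).det
    calc φ (fun i => N.subtype.dualMap (LinearMap.proj i))
        = Matrix.det ((Matrix.of v).transpose) := rfl
      _ = (Matrix.of v).det := Matrix.det_transpose _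
  · -- characteristic ideal ⊆ Fitting ideal (uses pd ≤ 1)
    intro x hx
    rw [charIdealAux] at hx
    obtain ⟨φ, rfl⟩ := LinearMap.mem_range.mp hx
    obtain ⟨t, ρ, hρ, hkρ⟩ := hpd
    haveI : Module.Projective R N := projective_ker_of_projective_ker π hπ ρ hρ hkρ
    haveI : Module.Finite R N := Module.Finite.iff_fg.mpr (IsNoetherian.noetherian N)
    obtain ⟨n, xg, f, hdual⟩ := exists_dual_pair (R := R) N
    set L : (Fin n → R) →ₗ[R] Module.Dual R N :=
      { toFun := fun w => ∑ j, w j • f j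
        map_add' := fun a b => by simp [add_smul, Finset.sum_add_distrib]
        map_smul' := fun c a => by simp [mul_smul, Finset.smul_sum] } with hL
    set c : Fin s → Fin n → R := fun i j => N.subtype.dualMap (LinearMap.proj i) (xg j) with hc
    have hgL : ∀ i : Fin s, N.subtype.dualMap (LinearMap.proj i) = L (c i) := by
      intro i
      refine LinearMap.ext fun y => ?_
      have h1 : (L (c i)) y = ∑ j, c i j * f j y := by
        show (∑ j, c i j • f j) y = _
        rw [LinearMap.sum_apply]
        simp
      rw [h1]
      conv_lhs => rw [← hdual y]
      rw [map_sum]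
      refine Finset.sum_congr rfl fun j _ => ?_
      rw [map_smul, smul_eq_mul, mul_comm]
    have harg : (fun i => N.subtype.dualMap (LinearMap.proj i)) = fun i => L (c i) := by
      funext i; exact hgL i
    have hval : (((extEval R s) ∘ₗ (extBidualMap R s N.subtype)) φ)
        = (φ.compLinearMap L) c := by
      show φ (fun i => N.subtype.dualMap (LinearMap.proj i)) = φ (fun i => L (c i))
      rw [harg]
    rw [hval]
    have hmem := alt_apply_mem_span_det (φ.compLinearMap L) c
    refine Ideal.span_le.mpr ?_ hmem
    rintro y ⟨k, rfl⟩
    refine Ideal.subset_span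
      ⟨fun i => (xg (k i) : Fin s → R), fun i => (xg (k i)).2, ?_⟩
    rw [show (Matrix.of fun i j => c i (k j))
        = (Matrix.of fun i => (xg (k i) : Fin s → R)).transpose from rfl, Matrix.det_transpose]
end

section
/- Let R be a noetherian commutative ring such that R_𝔯 is Gorenstein for every prime 𝔯 of height 0 (condition (G₀)) and R satisfies Serre's condition (S₁). Then for every integer r ≥ 0 and every injection M ↪ N of finitely generated R-modules, the induced homomorphism ⋂^r_R M → ⋂^r_R N of exterior bi-duals is injective. -/
open Module

section Defs2
variable (R : Type*) [CommRing R]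

/-- `DepthGE A n` : the local ring `A` has depth at least `n`, i.e. there is a regular
sequence of length `n` contained in the maximal ideal. -/
def DepthGE (A : Type*) [CommRing A] [IsLocalRing A] (n : ℕ) : Prop :=
  ∃ rs : List A, rs.length = n ∧ (∀ r ∈ rs, r ∈ IsLocalRing.maximalIdeal A) ∧
    RingTheory.Sequence.IsRegular A rs

/-- The height of a prime ideal. -/
noncomputable def primeHt (𝔯 : Ideal R) (h : 𝔯.IsPrime) : ℕ∞ :=
  Order.height (⟨𝔯, h⟩ : PrimeSpectrum R)

/-- Condition (G₀): the localization of `R` at every prime of height `0` is Gorenstein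
(for a zero-dimensional local ring, Gorenstein means self-injective). -/
def CondG0 : Prop :=
  ∀ (𝔯 : Ideal R) (h : 𝔯.IsPrime), primeHt R 𝔯 h ≤ 0 →
    Module.Injective (Localization.AtPrime 𝔯) (Localization.AtPrime 𝔯)

/-- Serre's condition (Sₙ): `depth R_𝔯 ≥ min {n, ht 𝔯}` for every prime `𝔯`. -/
def CondS (n : ℕ) : Prop :=
  ∀ (𝔯 : Ideal R) (h : 𝔯.IsPrime) (m : ℕ),
    (m : ℕ∞) ≤ min (n : ℕ∞) (primeHt R 𝔯 h) → DepthGE (Localization.AtPrime 𝔯) m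

/-- The canonical map `I** → R** = R` for an ideal `I ⊆ R`. -/
noncomputable def bidualToRing (I : Ideal R) :
    Module.Dual R (Module.Dual R I) →ₗ[R] R where
  toFun φ := φ ((Submodule.subtype I).dualMap (LinearMap.id : R →ₗ[R] R))
  map_add' := by intros; rfl
  map_smul' := by intros; rfl
end Defs2


section Aux

universe u

open RingTheory.Sequence

/-- If `𝔭` is an associated prime of `R` (the annihilator of `b ≠ 0`) and `R` satisfies
`(S₁)`, then `𝔭` has height zero. -/
lemma assoc_ht_zero {R : Type*} [CommRing R] (hS : CondS R 1) {𝔭 : Ideal R} (hp : 𝔭.IsPrime)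
    {b : R} (hb : b ≠ 0) (hPb : 𝔭 = (Submodule.span R {b}).annihilator) :
    primeHt R 𝔭 hp ≤ 0 := by
  by_contra hht
  have h1 : (1 : ℕ∞) ≤ primeHt R 𝔭 hp := by
    rcases le_or_gt (primeHt R 𝔭 hp) 0 with h | h
    · exact absurd h hht
    · exact Order.one_le_iff_pos.mpr h
  obtain ⟨rs, hlen, hmem, hreg⟩ := hS 𝔭 hp 1 (by simpa using le_min le_rfl h1)
  obtain ⟨c, rfl⟩ := List.length_eq_one_iff.mp hlen
  have hcreg : IsSMulRegular (Localization.AtPrime 𝔭) c :=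
    ((RingTheory.Sequence.isWeaklyRegular_cons_iff (Localization.AtPrime 𝔭) c []).mp
      hreg.toIsWeaklyRegular).1
  have hβ : algebraMap R (Localization.AtPrime 𝔭) b ≠ 0 := by
    intro h0
    obtain ⟨m, hm⟩ := (IsLocalization.map_eq_zero_iff 𝔭.primeCompl
      (Localization.AtPrime 𝔭) b).mp h0
    have hmem𝔭 : (m : R) ∈ 𝔭 := by
      have hma := (Submodule.mem_annihilator_span_singleton b (m : R)).mpr
        (by simpa [smul_eq_mul] using hm)
      simpa only [← hPb] using hma
    exact m.2 hmem𝔭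
  have hcb : c • (algebraMap R (Localization.AtPrime 𝔭) b) = 0 := by
    have hKle : IsLocalRing.maximalIdeal (Localization.AtPrime 𝔭) ≤
        (Submodule.span (Localization.AtPrime 𝔭)
          {algebraMap R (Localization.AtPrime 𝔭) b}).annihilator := by
      rw [← Localization.AtPrime.map_eq_maximalIdeal, Ideal.map_le_iff_le_comap]
      intro p hpP
      rw [Ideal.mem_comap, Submodule.mem_annihilator_span_singleton, smul_eq_mul, ← map_mul]
      have hp0 : p * b = 0 := by
        have := hPb ▸ hpP
        simpa [smul_eq_mul] using (Submodule.mem_annihilator_span_singleton _ _).mp this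
      rw [hp0, map_zero]
    have := hKle (hmem c (List.mem_singleton.mpr rfl))
    exact (Submodule.mem_annihilator_span_singleton _ _).mp this
  refine hβ (hcreg ?_)
  show c • algebraMap R (Localization.AtPrime 𝔭) b = c • (0 : Localization.AtPrime 𝔭)
  rw [smul_zero, hcb]

/-- Key step: under `(G₀)` and `(S₁)`, for any injection `f : M → N` of finite modules,
any functional on `M` can (after multiplication by an element outside any given associated
prime of `R`) be extended along `f`. -/
lemma exists_smul_dualMap {R : Type u} [CommRing R] [IsNoetherianRing R]
    (hG : CondG0 R) (hS : CondS R 1)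
    {M N : Type u} [AddCommGroup M] [Module R M] [AddCommGroup N] [Module R N]
    [Module.Finite R M] [Module.Finite R N]
    (f : M →ₗ[R] N) (hf : Function.Injective f)
    {𝔭 : Ideal R} (hp : 𝔭.IsPrime) {b : R} (hb : b ≠ 0)
    (hPb : 𝔭 = (Submodule.span R {b}).annihilator) (x : Module.Dual R M) :
    ∃ u ∈ 𝔭.primeCompl, ∃ z : Module.Dual R N, u • x = f.dualMap z := by
  haveI hMfp : Module.FinitePresentation R M := Module.finitePresentation_of_finite R M
  haveI hNfp : Module.FinitePresentation R N := Module.finitePresentation_of_finite R N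
  have hht := assoc_ht_zero hS hp hb hPb
  have hinj : Module.Injective (Localization.AtPrime 𝔭) (Localization.AtPrime 𝔭) :=
    hG 𝔭 hp hht
  let S := 𝔭.primeCompl
  let fL : LocalizedModule S M →ₗ[Localization S] LocalizedModule S N :=
    LocalizedModule.map S f
  have hfL : Function.Injective fL := LocalizedModule.map_injective S f hf
  let e : LocalizedModule S R ≃ₗ[R] Localization S :=
    IsLocalizedModule.iso S (Algebra.linearMap R (Localization S))
  let e1 : LocalizedModule S R →ₗ[Localization S] Localization S :=
    LinearMap.extendScalarsOfIsLocalization S (Localization S) e.toLinearMap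
  let e2 : Localization S →ₗ[Localization S] LocalizedModule S R :=
    LinearMap.extendScalarsOfIsLocalization S (Localization S) e.symm.toLinearMap
  let xL : LocalizedModule S M →ₗ[Localization S] LocalizedModule S R :=
    LocalizedModule.map S x
  obtain ⟨g, hg⟩ := hinj.out fL hfL (e1 ∘ₗ xL)
  let y : LocalizedModule S N →ₗ[Localization S] LocalizedModule S R := e2 ∘ₗ g
  have hy : ∀ m, y (fL m) = xL m := by
    intro m
    show e2 (g (fL m)) = xL m
    rw [hg m]
    show e.symm (e (xL m)) = xL m
    exact e.symm_apply_apply _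
  obtain ⟨⟨z, s⟩, hz⟩ :=
    IsLocalizedModule.surj S (LocalizedModule.map S (M := N) (N := R)) y
  have h1 : LocalizedModule.map S ((s : R) • x) = LocalizedModule.map S (f.dualMap z) := by
    apply LinearMap.ext
    intro w
    induction w using LocalizedModule.induction_on with
    | _ m t =>
      have hzev := LinearMap.congr_fun hz (LocalizedModule.mk (f m) t)
      rw [Submonoid.smul_def, LinearMap.smul_apply] at hzev
      have hym : y (LocalizedModule.mk (f m) t) = LocalizedModule.mk (x m) t := by
        have hfm : (LocalizedModule.mk (f m) t : LocalizedModule S N)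
            = fL (LocalizedModule.mk m t) := (LocalizedModule.map_mk S f m t).symm
        rw [hfm, hy]
        exact LocalizedModule.map_mk S x m t
      rw [hym, LocalizedModule.map_mk] at hzev
      calc LocalizedModule.map S ((s : R) • x) (LocalizedModule.mk m t)
          = LocalizedModule.mk (((s : R) • x) m) t := LocalizedModule.map_mk S _ m t
        _ = (s : R) • LocalizedModule.mk (x m) t := by
            rw [LinearMap.smul_apply, LocalizedModule.smul'_mk]
        _ = LocalizedModule.mk (z (f m)) t := hzev
        _ = LocalizedModule.mk ((f.dualMap z) m) t := by rw [LinearMap.dualMap_apply]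
        _ = LocalizedModule.map S (f.dualMap z) (LocalizedModule.mk m t) :=
            (LocalizedModule.map_mk S _ m t).symm
  obtain ⟨t0, ht0⟩ := IsLocalizedModule.exists_of_eq
    (S := S) (f := LocalizedModule.map S (M := M) (N := R)) h1
  refine ⟨(t0 : R) * (s : R), mul_mem t0.2 s.2, (t0 : R) • z, ?_⟩
  rw [mul_smul, map_smul]
  rw [Submonoid.smul_def, Submonoid.smul_def] at ht0
  exact ht0

end Aux

/-- If a noetherian ring satisfies (G₀) and (S₁), then for any injection `M ↪ N` of finitely
generated modules, the induced map on `r`-th exterior bi-duals is injective. -/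
theorem extBidualMap_injective (R : Type*) [CommRing R] [IsNoetherianRing R]
    (hG : CondG0 R) (hS : CondS R 1)
    (r : ℕ) (M N : Type*) [AddCommGroup M] [Module R M] [AddCommGroup N] [Module R N]
    [Module.Finite R M] [Module.Finite R N]
    (f : M →ₗ[R] N) (hf : Function.Injective f) :
    Function.Injective (extBidualMap R r f) := by
  have key : ∀ φ : ExtBidual R M r, extBidualMap R r f φ = 0 → φ = 0 := by
    intro φ hφ
    obtain ⟨m, π, hπ⟩ := Module.Finite.exists_fin' R M
    obtain ⟨n, ρ, hρ⟩ := Module.Finite.exists_fin' R N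
    let M' := (Fin m → R) ⧸ LinearMap.ker π
    let N' := (Fin n → R) ⧸ LinearMap.ker ρ
    let eM : M' ≃ₗ[R] M := π.quotKerEquivOfSurjective hπ
    let eN : N' ≃ₗ[R] N := ρ.quotKerEquivOfSurjective hρ
    haveI : Module.Finite R M' :=
      Module.Finite.of_surjective (LinearMap.ker π).mkQ (Submodule.mkQ_surjective _)
    haveI : Module.Finite R N' :=
      Module.Finite.of_surjective (LinearMap.ker ρ).mkQ (Submodule.mkQ_surjective _)
    let f' : M' →ₗ[R] N' := eN.symm.toLinearMap ∘ₗ f ∘ₗ eM.toLinearMap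
    have hf' : Function.Injective f' := by
      have : Function.Injective (eN.symm ∘ f ∘ eM) :=
        eN.symm.injective.comp (hf.comp eM.injective)
      exact this
    ext v
    show φ v = 0
    by_contra ha
    obtain ⟨P, hP, hle⟩ := exists_le_isAssociatedPrime_of_isNoetherianRing R (φ v) ha
    obtain ⟨hPp, b, hPb⟩ := isAssociatedPrime_iff.mp hP
    have hPb : P = (Submodule.span R {b}).annihilator := by
      rw [hPb]; ext a
      rw [Submodule.mem_colon_singleton, Submodule.mem_annihilator_span_singleton, Submodule.mem_bot]
    have hb : b ≠ 0 := by
      rintro rfl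
      apply hPp.ne_top
      rw [hPb, Submodule.span_zero_singleton, Submodule.annihilator_bot]
    have hexists : ∀ i : Fin r, ∃ u ∈ P.primeCompl, ∃ z : Module.Dual R N,
        u • (v i) = f.dualMap z := by
      intro i
      obtain ⟨u, hu, z', hz'⟩ := exists_smul_dualMap hG hS f' hf' hPp hb hPb
        ((v i) ∘ₗ eM.toLinearMap)
      refine ⟨u, hu, z' ∘ₗ eN.symm.toLinearMap, ?_⟩
      ext mm
      have h2 := LinearMap.congr_fun hz' (eM.symm mm)
      simp only [LinearMap.smul_apply, LinearMap.coe_comp, LinearEquiv.coe_coe,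
        Function.comp_apply, LinearEquiv.apply_symm_apply, LinearMap.dualMap_apply, f'] at h2 ⊢
      exact h2
    choose u hu z hz using hexists
    have hprod : (∏ i, u i) • φ v = 0 := by
      have h1 : φ (fun i => u i • v i) = (∏ i, u i) • φ v :=
        φ.toMultilinearMap.map_smul_univ u v
      have h2 : (fun i => u i • v i) = fun i => f.dualMap (z i) := funext hz
      have h3 : φ (fun i => f.dualMap (z i)) = 0 := by
        have := DFunLike.congr_fun hφ z
        simpa [extBidualMap] using this
      rw [h2] at h1
      rw [← h1]
      exact h3
    have hmemP : (∏ i, u i) ∈ P :=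
      hle (Submodule.mem_colon_singleton.mpr ((Submodule.mem_bot R).mpr hprod))
    exact (Submonoid.prod_mem _ fun i _ => hu i) hmemP
  intro φ ψ h
  have h0 : extBidualMap R r f (φ - ψ) = 0 := by rw [map_sub, h, sub_self]
  exact sub_eq_zero.mp (key _ h0)
end

section
/- Let R be a noetherian normal (integrally closed) domain and M a finitely generated R-module. Then char_R(M) = (Fitt^0_R(M))**, the reflexive hull of the zeroth Fitting ideal of M. -/
open Module

namespace CharFitt

variable {R : Type*} [CommRing R] {s : ℕ}

open scoped Matrix

variable (N : Submodule R (Fin s → R))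

/-- The coordinate functionals restricted to `N`. -/
noncomputable def pN (i : Fin s) : Dual R ↥N := (LinearMap.proj i) ∘ₗ N.subtype

lemma mem_charIdealAux_iff {c : R} :
    c ∈ charIdealAux R s N ↔ ∃ Λ : ExtBidual R ↥N s, Λ (pN N) = c := by
  constructor
  · rintro ⟨Λ, rfl⟩; exact ⟨Λ, rfl⟩
  · rintro ⟨Λ, h⟩; exact ⟨Λ, h⟩

variable (v : Fin s → Fin s → R)

/-- The matrix whose columns are the vectors `v j`. -/
noncomputable def Vcol : Matrix (Fin s) (Fin s) R := (Matrix.of v)ᵀ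

lemma det_Vcol : (Vcol v).det = (Matrix.of v).det := Matrix.det_transpose (Matrix.of v)

/-- The tuple `v` as elements of `N`. -/
noncomputable def Vel (hv : ∀ i, v i ∈ N) (j : Fin s) : ↥N := ⟨v j, hv j⟩

/-- The adjugate-row functionals on `N`. -/
noncomputable def theta (j : Fin s) : Dual R ↥N :=
  (LinearMap.proj j) ∘ₗ ((Vcol v).adjugate.mulVecLin ∘ₗ N.subtype)

lemma theta_apply (j : Fin s) (w : ↥N) :
    theta N v j w = ((Vcol v).adjugate *ᵥ (w : Fin s → R)) j := rfl

lemma master (w : ↥N) :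
    (Matrix.of v).det • (w : Fin s → R) = ∑ j, theta N v j w • v j := by
  have h : (Vcol v) *ᵥ ((Vcol v).adjugate *ᵥ (w : Fin s → R))
      = (Matrix.of v).det • (w : Fin s → R) := by
    rw [Matrix.mulVec_mulVec, Matrix.mul_adjugate, det_Vcol, Matrix.smul_mulVec,
      Matrix.one_mulVec]
  rw [← h]
  funext k
  simp only [Matrix.mulVec, dotProduct, Finset.sum_apply, Pi.smul_apply, smul_eq_mul]
  exact Finset.sum_congr rfl fun j _ => by rw [theta_apply]; exact mul_comm _ _

lemma masterN (hv : ∀ i, v i ∈ N) (w : ↥N) :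
    (Matrix.of v).det • w = ∑ j, theta N v j w • Vel N v hv j := by
  apply Subtype.ext
  push_cast [Submodule.coe_sum]
  exact master N v w

lemma masterDual (hv : ∀ i, v i ∈ N) (η : Dual R ↥N) :
    (Matrix.of v).det • η = ∑ j, η (Vel N v hv j) • theta N v j := by
  ext w
  have := congrArg η (masterN N v hv w)
  simp only [map_smul, map_sum, smul_eq_mul] at this
  simp only [LinearMap.smul_apply, LinearMap.coe_sum, Finset.sum_apply, smul_eq_mul]
  rw [this]
  exact Finset.sum_congr rfl fun j _ => mul_comm _ _

/-- `x ↦ ∑ j, x j • θ j`. -/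
noncomputable def Tmap : (Fin s → R) →ₗ[R] Dual R ↥N where
  toFun x := ∑ j, x j • theta N v j
  map_add' x y := by simp [add_smul, Finset.sum_add_distrib]
  map_smul' c x := by simp [Finset.smul_sum, smul_smul]

lemma Tmap_single (i : Fin s) : Tmap N v (Pi.single i 1) = theta N v i := by
  simp only [Tmap, LinearMap.coe_mk, AddHom.coe_mk]
  rw [Finset.sum_eq_single i]
  · simp
  · intro j _ hj; simp [Pi.single_eq_of_ne hj]
  · simp

/-- The determinant form `η ↦ det (η i (v j))` as an alternating map. -/
noncomputable def Dalt (hv : ∀ i, v i ∈ N) : (Dual R ↥N) [⋀^Fin s]→ₗ[R] R :=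
  (Matrix.detRowAlternating).compLinearMap
    (LinearMap.pi (fun j => LinearMap.applyₗ (Vel N v hv j)))

lemma Dalt_apply (hv : ∀ i, v i ∈ N) (η : Fin s → Dual R ↥N) :
    Dalt N v hv η = (Matrix.of (fun i j => η i (Vel N v hv j))).det := rfl

lemma Dalt_pN (hv : ∀ i, v i ∈ N) : Dalt N v hv (pN N) = (Matrix.of v).det := by
  rw [Dalt_apply, ← Matrix.det_transpose (Matrix.of v)]
  congr 1

/-- Key expansion: `δ₀^s • Λ η = (Dalt η) • Λ θ`. -/
lemma key_expansion (hv : ∀ i, v i ∈ N) (Λ : ExtBidual R ↥N s)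
    (η : Fin s → Dual R ↥N) :
    (Matrix.of v).det ^ s • Λ η = Dalt N v hv η • Λ (theta N v) := by
  classical
  have h1 : (Λ.compLinearMap (Tmap N v)) (fun i => fun j => η i (Vel N v hv j))
      = (Matrix.of v).det ^ s • Λ η := by
    rw [AlternatingMap.compLinearMap_apply]
    have : ∀ i, Tmap N v (fun j => η i (Vel N v hv j)) = (Matrix.of v).det • η i := by
      intro i
      rw [masterDual N v hv (η i)]
      rfl
    calc (Λ fun i => Tmap N v fun j => η i (Vel N v hv j))
        = Λ (fun i => (Matrix.of v).det • η i) := by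
          congr 1; funext i; rw [this i]
      _ = (∏ _i : Fin s, (Matrix.of v).det) • Λ η := by
          exact (Λ : MultilinearMap R (fun _ : Fin s => Dual R ↥N) R).map_smul_univ _ _
      _ = (Matrix.of v).det ^ s • Λ η := by
          rw [Finset.prod_const]; simp
  have h2 := AlternatingMap.eq_smul_basis_det (Pi.basisFun R (Fin s))
    (Λ.compLinearMap (Tmap N v))
  have h3 : (Λ.compLinearMap (Tmap N v)) ⇑(Pi.basisFun R (Fin s)) = Λ (theta N v) := by
    rw [AlternatingMap.compLinearMap_apply]
    congr 1
    funext i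
    rw [Pi.basisFun_apply, Tmap_single]
  have h4 : (Pi.basisFun R (Fin s)).det (fun i j => η i (Vel N v hv j)) = Dalt N v hv η := by
    rw [Basis.det_apply, Dalt_apply,
      ← Matrix.det_transpose (Matrix.of fun i j => (η i) (Vel N v hv j))]
    congr 1
  rw [← h1, h2, AlternatingMap.smul_apply, h3, h4, smul_eq_mul, smul_eq_mul, mul_comm]

end CharFitt

namespace CharFitt

section Domain

variable {R : Type*} [CommRing R] [IsDomain R] {s : ℕ}
variable (N : Submodule R (Fin s → R)) (v : Fin s → Fin s → R)

open scoped Matrix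

lemma key_main (hv : ∀ i, v i ∈ N) (hd : (Matrix.of v).det ≠ 0)
    (Λ : ExtBidual R ↥N s) (η : Fin s → Dual R ↥N) :
    (Matrix.of v).det * Λ η = Dalt N v hv η * Λ (pN N) := by
  have e1 : (Matrix.of v).det ^ s * Λ η = Dalt N v hv η * Λ (theta N v) := by
    simpa [smul_eq_mul] using key_expansion N v hv Λ η
  have e2 : (Matrix.of v).det ^ s * Λ (pN N) = (Matrix.of v).det * Λ (theta N v) := by
    have := key_expansion N v hv Λ (pN N)
    rw [Dalt_pN] at this
    simpa [smul_eq_mul] using this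
  apply mul_left_cancel₀ (pow_ne_zero s hd)
  calc (Matrix.of v).det ^ s * ((Matrix.of v).det * Λ η)
      = (Matrix.of v).det * ((Matrix.of v).det ^ s * Λ η) := by ring
    _ = (Matrix.of v).det * (Dalt N v hv η * Λ (theta N v)) := by rw [e1]
    _ = Dalt N v hv η * ((Matrix.of v).det * Λ (theta N v)) := by ring
    _ = Dalt N v hv η * ((Matrix.of v).det ^ s * Λ (pN N)) := by rw [e2]
    _ = (Matrix.of v).det ^ s * (Dalt N v hv η * Λ (pN N)) := by ring

lemma det_identity (hv : ∀ i, v i ∈ N) (hd : (Matrix.of v).det ≠ 0) (hs : s ≠ 0)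
    (η : Fin s → Dual R ↥N) (w : Fin s → Fin s → R) (hw : ∀ k, w k ∈ N) :
    (Matrix.of v).det * (Matrix.of (fun i k => η i (⟨w k, hw k⟩ : ↥N))).det
      = Dalt N v hv η * (Matrix.of w).det := by
  classical
  set δ := (Matrix.of v).det with hδ
  have claim1 : δ • (Matrix.of (fun i k => η i (⟨w k, hw k⟩ : ↥N)))
      = (Matrix.of (fun i j => η i (Vel N v hv j))) * ((Vcol v).adjugate * (Vcol w)) := by
    ext i k
    have hm := congrArg (η i) (masterN N v hv (⟨w k, hw k⟩ : ↥N))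
    simp only [map_smul, map_sum, smul_eq_mul] at hm
    simp only [Matrix.smul_apply, Matrix.of_apply, smul_eq_mul]
    rw [hm]
    simp only [Matrix.mul_apply, Matrix.of_apply]
    refine Finset.sum_congr rfl fun j _ => ?_
    rw [theta_apply]
    simp only [Matrix.mul_apply, Matrix.mulVec, dotProduct, Finset.sum_mul, Vcol,
      Matrix.transpose_apply, Matrix.of_apply]
    rw [mul_comm, Finset.sum_mul]
  have hdet := congrArg Matrix.det claim1
  rw [Matrix.det_smul, Matrix.det_mul, Matrix.det_mul, Matrix.det_adjugate, det_Vcol,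
    det_Vcol] at hdet
  simp only [Fintype.card_fin] at hdet
  -- hdet : δ ^ s * det P = H.det * (δ ^ (s-1) * det (of w))
  have hs1 : δ ^ s = δ ^ (s - 1) * δ := by
    rw [← pow_succ, Nat.sub_add_cancel (Nat.one_le_iff_ne_zero.mpr hs)]
  rw [Dalt_apply]
  apply mul_left_cancel₀ (pow_ne_zero (s - 1) hd)
  calc δ ^ (s - 1) * (δ * (Matrix.of (fun i k => η i (⟨w k, hw k⟩ : ↥N))).det)
      = δ ^ s * (Matrix.of (fun i k => η i (⟨w k, hw k⟩ : ↥N))).det := by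
        rw [hs1]; ring
    _ = (Matrix.of (fun i j => η i (Vel N v hv j))).det * (δ ^ (s - 1) * (Matrix.of w).det) :=
        hdet
    _ = δ ^ (s - 1) * ((Matrix.of (fun i j => η i (Vel N v hv j))).det * (Matrix.of w).det) := by
        ring

set_option maxHeartbeats 1000000 in
lemma char_subset_div (hv : ∀ i, v i ∈ N) (hd : (Matrix.of v).det ≠ 0) {c : R}
    (hc : c ∈ charIdealAux R s N) (η : Fin s → Dual R ↥N) :
    (Matrix.of v).det ∣ c * Dalt N v hv η := by
  obtain ⟨Λ, rfl⟩ := (mem_charIdealAux_iff N).mp hc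
  exact ⟨Λ η, by rw [mul_comm, key_main N v hv hd]⟩

set_option maxHeartbeats 1000000 in
lemma div_subset_char (hv : ∀ i, v i ∈ N) (hd : (Matrix.of v).det ≠ 0) {c : R}
    (h : ∀ η, (Matrix.of v).det ∣ c * Dalt N v hv η) :
    c ∈ charIdealAux R s N := by
  classical
  choose g hg using h
  set Λ : ExtBidual R ↥N s :=
    { toFun := g
      map_update_add' := fun m i x y => by
        apply mul_left_cancel₀ hd
        rw [← hg, AlternatingMap.map_update_add, mul_add, mul_add, hg, hg]
      map_update_smul' := fun m i r x => by
        apply mul_left_cancel₀ hd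
        rw [smul_eq_mul, mul_left_comm, ← hg, ← hg, AlternatingMap.map_update_smul, smul_eq_mul,
          mul_left_comm]
      map_eq_zero_of_eq' := fun m i j hm hij => by
        have h0 : (Matrix.of v).det * g m = 0 := by
          rw [← hg, AlternatingMap.map_eq_zero_of_eq (Dalt N v hv) m hm hij, mul_zero]
        exact (mul_eq_zero.mp h0).resolve_left hd } with hΛ
  refine (mem_charIdealAux_iff N).mpr ⟨Λ, ?_⟩
  have : (Matrix.of v).det * Λ (pN N) = (Matrix.of v).det * c := by
    show (Matrix.of v).det * g (pN N) = _
    rw [← hg, Dalt_pN, mul_comm]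
  exact mul_left_cancel₀ hd this

lemma det_mem_fitt (hv : ∀ i, v i ∈ N) : (Matrix.of v).det ∈ fittIdealAux R s N :=
  Ideal.subset_span ⟨v, hv, rfl⟩

lemma dalt_colon (hv : ∀ i, v i ∈ N) (hd : (Matrix.of v).det ≠ 0) (hs : s ≠ 0)
    (η : Fin s → Dual R ↥N) :
    ∀ x ∈ fittIdealAux R s N, (Matrix.of v).det ∣ Dalt N v hv η * x := by
  intro x hx
  induction hx using Submodule.span_induction with
  | mem y hy =>
    obtain ⟨w, hw, rfl⟩ := hy
    exact ⟨(Matrix.of (fun i k => η i (⟨w k, hw k⟩ : ↥N))).det,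
      (det_identity N v hv hd hs η w hw).symm⟩
  | zero => simp
  | add y z _ _ hy hz => rw [mul_add]; exact dvd_add hy hz
  | smul a y _ hy =>
    rw [smul_eq_mul, mul_left_comm]
    exact Dvd.dvd.mul_left hy a

/-- Membership in the range of `bidualToRing` from the double-colon condition. -/
lemma mem_range_bidual (hd : (Matrix.of v).det ≠ 0)
    (hδI : (Matrix.of v).det ∈ fittIdealAux R s N) {t : R}
    (h : ∀ r : R, (∀ x ∈ fittIdealAux R s N, (Matrix.of v).det ∣ r * x) →
      (Matrix.of v).det ∣ t * r) :
    t ∈ LinearMap.range (bidualToRing R (fittIdealAux R s N)) := by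
  classical
  set I := fittIdealAux R s N with hI
  set δ := (Matrix.of v).det with hδ
  have key : ∀ (f : Dual R ↥I) (x : R) (hx : x ∈ I),
      f ⟨δ, hδI⟩ * x = δ * f ⟨x, hx⟩ := by
    intro f x hx
    have h1 : (x • (⟨δ, hδI⟩ : ↥I)) = δ • (⟨x, hx⟩ : ↥I) := by
      apply Subtype.ext
      simp [mul_comm]
    calc f ⟨δ, hδI⟩ * x = x • f ⟨δ, hδI⟩ := by rw [smul_eq_mul, mul_comm]
      _ = f (x • (⟨δ, hδI⟩ : ↥I)) := (map_smul f x _).symm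
      _ = f (δ • (⟨x, hx⟩ : ↥I)) := by rw [h1]
      _ = δ * f ⟨x, hx⟩ := by rw [map_smul, smul_eq_mul]
  have hcond : ∀ f : Dual R ↥I, ∀ x ∈ I, δ ∣ f ⟨δ, hδI⟩ * x := by
    intro f x hx
    exact ⟨f ⟨x, hx⟩, key f x hx⟩
  choose q hq using fun f : Dual R ↥I => h (f ⟨δ, hδI⟩) (hcond f)
  -- hq f : t * f ⟨δ, hδI⟩ = δ * q f
  set φ : Dual R (Dual R ↥I) :=
    { toFun := q
      map_add' := fun f f' => by
        apply mul_left_cancel₀ hd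
        rw [← hq, LinearMap.add_apply, mul_add, mul_add, hq, hq]
      map_smul' := fun a f => by
        apply mul_left_cancel₀ hd
        show δ * q (a • f) = δ * (a • q f)
        rw [smul_eq_mul, mul_left_comm δ a, ← hq, ← hq, LinearMap.smul_apply, smul_eq_mul,
          mul_left_comm t a] } with hφ
  refine ⟨φ, ?_⟩
  apply mul_left_cancel₀ hd
  show δ * q ((Submodule.subtype I).dualMap (LinearMap.id : R →ₗ[R] R)) = δ * t
  rw [← hq]
  have : ((Submodule.subtype I).dualMap (LinearMap.id : R →ₗ[R] R)) ⟨δ, hδI⟩ = δ := rfl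
  rw [this, mul_comm]

lemma range_bidual_subset (hd : (Matrix.of v).det ≠ 0)
    (hδI : (Matrix.of v).det ∈ fittIdealAux R s N) {t : R}
    (ht : t ∈ LinearMap.range (bidualToRing R (fittIdealAux R s N)))
    (r : R) (hr : ∀ x ∈ fittIdealAux R s N, (Matrix.of v).det ∣ r * x) :
    (Matrix.of v).det ∣ t * r := by
  classical
  set I := fittIdealAux R s N with hI
  set δ := (Matrix.of v).det with hδ
  obtain ⟨φ, rfl⟩ := ht
  have hr' : ∀ x : ↥I, ∃ gx, r * (x : R) = δ * gx := fun x => hr x x.2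
  choose q hq using hr'
  set f : Dual R ↥I :=
    { toFun := q
      map_add' := fun x y => by
        apply mul_left_cancel₀ hd
        rw [← hq, Submodule.coe_add, mul_add, mul_add, ← hq, ← hq]
      map_smul' := fun a x => by
        apply mul_left_cancel₀ hd
        show δ * q (a • x) = δ * (a • q x)
        rw [smul_eq_mul, mul_left_comm δ a, ← hq, ← hq, SetLike.val_smul, smul_eq_mul,
          mul_left_comm r a] } with hf
  have hfδ : δ • f = r • ((Submodule.subtype I).dualMap (LinearMap.id : R →ₗ[R] R)) := by
    ext x
    show δ * q x = r * (x : R)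
    exact (hq x).symm
  refine ⟨φ f, ?_⟩
  have h2 : δ * φ f = r * φ ((Submodule.subtype I).dualMap (LinearMap.id : R →ₗ[R] R)) := by
    rw [← smul_eq_mul, ← map_smul, hfδ, map_smul, smul_eq_mul]
  show (φ ((Submodule.subtype I).dualMap (LinearMap.id : R →ₗ[R] R))) * r = δ * φ f
  rw [h2, mul_comm]

end Domain
end CharFitt

namespace CharFitt

section Helpers

open scoped Matrix

/-- In a noetherian ring, if `b ∤ a` then there is a prime `P` of the form `((b) : u)`
containing `((b) : a)`. -/
lemma exists_prime_colon {R : Type*} [CommRing R] [IsNoetherianRing R] {a b : R}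
    (hab : ¬ b ∣ a) :
    ∃ (P : Ideal R) (u : R), P.IsPrime ∧ (∀ z : R, a * z ∈ Ideal.span {b} → z ∈ P) ∧
      ¬ b ∣ u ∧ (∀ z : R, z ∈ P ↔ u * z ∈ Ideal.span {b}) := by
  classical
  let col : R → Ideal R := fun y => (Ideal.span {b}).colon (Ideal.span {y})
  have hcol : ∀ y z : R, z ∈ col y ↔ y * z ∈ Ideal.span {b} := by
    intro y z
    have h := Submodule.mem_colon_span_singleton (N := Ideal.span {b}) (x := y) (r := z)
    rw [smul_eq_mul, mul_comm] at h
    exact h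
  have hnotmem : ∀ y : R, ¬ b ∣ y → (1 : R) ∉ col y := by
    intro y hy h1
    rw [hcol, mul_one, Ideal.mem_span_singleton] at h1
    exact hy h1
  let S : Set (Ideal R) := {J | ∃ y : R, ¬ b ∣ y ∧ col a ≤ col y ∧ J = col y}
  have hSne : S.Nonempty := ⟨col a, a, hab, le_refl _, rfl⟩
  obtain ⟨J, hJS, hJmax⟩ := set_has_maximal_iff_noetherian.mpr inferInstance S hSne
  obtain ⟨u, hbu, hau, rfl⟩ := hJS
  refine ⟨col u, u, ?_, ?_, hbu, fun z => hcol u z⟩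
  · constructor
    · intro htop
      exact hnotmem u hbu (htop ▸ Submodule.mem_top)
    · intro f g hfg
      by_cases hf : f ∈ col u
      · exact Or.inl hf
      · right
        have hbuf : ¬ b ∣ u * f := by
          intro hdvd
          exact hf ((hcol u f).mpr (Ideal.mem_span_singleton.mpr hdvd))
        have hle : col u ≤ col (u * f) := by
          intro z hz
          rw [hcol] at hz ⊢
          rw [mul_assoc, mul_comm f z, ← mul_assoc]
          exact Ideal.mul_mem_right f _ hz
        have heq : col u = col (u * f) :=
          hle.lt_or_eq.resolve_left (hJmax (col (u * f)) ⟨u * f, hbuf, le_trans hau hle, rfl⟩)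
        have hg : g ∈ col (u * f) := by
          rw [hcol, mul_assoc]
          exact (hcol u (f * g)).mp hfg
        exact heq.symm ▸ hg
  · intro z hz
    exact hau ((hcol a z).mpr hz)

/-- Rows of a square matrix with nonzero determinant over a domain are linearly
independent. -/
lemma rows_linearIndependent {A : Type*} [CommRing A] [IsDomain A] {s : ℕ}
    (M : Matrix (Fin s) (Fin s) A) (hdet : M.det ≠ 0) :
    LinearIndependent A (fun i => M i) := by
  rw [Fintype.linearIndependent_iff]
  intro coef hcoef
  have h1 : coef ᵥ* M = 0 := by
    rw [← hcoef]
    funext k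
    simp [Matrix.vecMul, dotProduct, Finset.sum_apply, Pi.smul_apply, smul_eq_mul]
  have h2 : coef ᵥ* (M * M.adjugate) = 0 := by
    rw [← Matrix.vecMul_vecMul, h1, Matrix.zero_vecMul]
  rw [Matrix.mul_adjugate] at h2
  intro i
  have h3 : (coef ᵥ* (M.det • (1 : Matrix (Fin s) (Fin s) A))) i = M.det * coef i := by
    simp [Matrix.vecMul, dotProduct, Matrix.smul_apply, Matrix.one_apply, mul_comm]
  rw [h2] at h3
  have := h3.symm
  rcases mul_eq_zero.mp this with h | h
  · exact absurd h hdet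
  · exact h

/-- A determinant whose rows lie in the span of a set `S` lies in any ideal containing
all determinants of tuples from `S`. -/
lemma det_mem_of_rows_mem_span {A : Type*} [CommRing A] {s : ℕ}
    (S : Set (Fin s → A)) (J : Ideal A)
    (hJ : ∀ w : Fin s → (Fin s → A), (∀ i, w i ∈ S) → (Matrix.of w).det ∈ J)
    (w : Fin s → (Fin s → A)) (hw : ∀ i, w i ∈ Submodule.span A S) :
    (Matrix.of w).det ∈ J := by
  classical
  have hrep : ∀ i, ∃ (n : ℕ) (aa : Fin n → A) (y : Fin n → S),
      w i = ∑ k, aa k • (y k : Fin s → A) := by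
    intro i
    obtain ⟨n, aa, y, hy⟩ := Submodule.mem_span_set'.mp (hw i)
    exact ⟨n, aa, y, hy.symm⟩
  choose n aa y hy using hrep
  -- padded summands over ℕ
  let gg : Fin s → ℕ → (Fin s → A) := fun i k =>
    if h : k < n i then aa i ⟨k, h⟩ • (y i ⟨k, h⟩ : Fin s → A) else 0
  have hw' : w = fun i => ∑ k ∈ Finset.range (n i), gg i k := by
    funext i
    rw [← Fin.sum_univ_eq_sum_range (fun k => gg i k) (n i), hy i]
    refine Finset.sum_congr rfl fun k _ => ?_
    simp only [gg, k.isLt, dif_pos, Fin.eta]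
  have hdet0 : (Matrix.of w).det = Matrix.detRowAlternating w := rfl
  rw [hdet0, hw']
  rw [show (Matrix.detRowAlternating (fun i => ∑ k ∈ Finset.range (n i), gg i k) : A)
      = ∑ rr ∈ Fintype.piFinset (fun i => Finset.range (n i)),
          Matrix.detRowAlternating (fun i => gg i (rr i)) from
    (Matrix.detRowAlternating :
      (Fin s → A) [⋀^Fin s]→ₗ[A] A).toMultilinearMap.map_sum_finset gg
        (fun i => Finset.range (n i))]
  apply Ideal.sum_mem
  intro rr _
  by_cases hall : ∀ i, rr i < n i
  · have hterm : (fun i => gg i (rr i))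
        = fun i => aa i ⟨rr i, hall i⟩ • (y i ⟨rr i, hall i⟩ : Fin s → A) :=
      funext fun i => dif_pos (hall i)
    rw [hterm]
    rw [show (Matrix.detRowAlternating (fun i => aa i ⟨rr i, hall i⟩
          • (y i ⟨rr i, hall i⟩ : Fin s → A)) : A)
        = (∏ i, aa i ⟨rr i, hall i⟩) •
            Matrix.detRowAlternating (fun i => (y i ⟨rr i, hall i⟩ : Fin s → A)) from
      (Matrix.detRowAlternating :
        (Fin s → A) [⋀^Fin s]→ₗ[A] A).toMultilinearMap.map_smul_univ _ _]
    exact Submodule.smul_mem J _ (hJ _ fun i => (y i ⟨rr i, hall i⟩).2)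
  · push_neg at hall
    obtain ⟨i0, hi0⟩ := hall
    have hzero : gg i0 (rr i0) = 0 := dif_neg (by omega)
    rw [AlternatingMap.map_coord_zero Matrix.detRowAlternating i0 hzero]
    exact J.zero_mem

end Helpers
end CharFitt

namespace CharFitt

section LocalStep

open scoped Matrix

set_option maxHeartbeats 1000000 in
/-- The main local computation: if `A` is a localization of `R` at a prime `P` which happens
to be a PID, then the divisibility conditions on `c` and `r` force
`c * r ∈ δ · A`. -/
lemma local_divisibility {R : Type*} [CommRing R] [IsDomain R] [IsNoetherianRing R] {s : ℕ}
    (N : Submodule R (Fin s → R)) (v : Fin s → Fin s → R) (hv : ∀ i, v i ∈ N)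
    (hd : (Matrix.of v).det ≠ 0)
    (P : Ideal R) [P.IsPrime]
    (A : Type*) [CommRing A] [IsDomain A] [IsPrincipalIdealRing A] [Algebra R A]
    [IsLocalization.AtPrime A P]
    {c r : R}
    (hc : ∀ η : Fin s → Dual R ↥N, (Matrix.of v).det ∣ c * Dalt N v hv η)
    (hr : ∀ x ∈ fittIdealAux R s N, (Matrix.of v).det ∣ r * x) :
    algebraMap R A (c * r) ∈ Ideal.span {algebraMap R A ((Matrix.of v).det)} := by
  classical
  set δ := (Matrix.of v).det with hδdef
  have halg : Function.Injective (algebraMap R A) :=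
    IsLocalization.injective A P.primeCompl_le_nonZeroDivisors
  set alg := algebraMap R A with halgdef
  have halgδ : alg δ ≠ 0 := fun h0 => hd (halg (by rw [h0, map_zero]))
  -- the coordinatewise algebra map, as an `R`-linear map
  set g : (Fin s → R) →ₗ[R] (Fin s → A) :=
    LinearMap.pi (fun k => (Algebra.linearMap R A).comp (LinearMap.proj k)) with hgdef
  set NA : Submodule A (Fin s → A) := Submodule.span A (g '' (N : Set (Fin s → R)))
    with hNAdef
  -- finiteness of NA
  obtain ⟨F, hF⟩ : N.FG := IsNoetherian.noetherian N
  have hNAspan : NA = Submodule.span A (g '' (F : Set (Fin s → R))) := by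
    apply le_antisymm
    · rw [hNAdef, Submodule.span_le]
      rintro _ ⟨x, hx, rfl⟩
      have hx2 : x ∈ Submodule.span R (F : Set (Fin s → R)) := by rw [hF]; exact hx
      have h2 : g x ∈ Submodule.map g (Submodule.span R (F : Set (Fin s → R))) :=
        ⟨x, hx2, rfl⟩
      rw [Submodule.map_span] at h2
      exact Submodule.span_le_restrictScalars R A _ h2
    · refine Submodule.span_mono (Set.image_mono ?_)
      rw [← hF]
      exact Submodule.subset_span
  have hNAfg : NA.FG := by
    rw [hNAspan]
    exact ⟨F.image g, by rw [Finset.coe_image]⟩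
  haveI : Module.Finite A ↥NA := Module.Finite.iff_fg.mpr hNAfg
  -- basis of NA
  set bb := Module.Free.chooseBasis A ↥NA with hbb
  have hgvN : ∀ j, g (v j) ∈ NA := fun j => Submodule.subset_span ⟨v j, hv j, rfl⟩
  have hMg : ((Matrix.of v).map alg).det = alg δ := by
    rw [hδdef, RingHom.map_det, RingHom.mapMatrix_apply]
  have hMgne : ((Matrix.of v).map alg).det ≠ 0 := by rw [hMg]; exact halgδ
  have hindep0 : LinearIndependent A (fun j => ((Matrix.of v).map alg) j) :=
    rows_linearIndependent _ hMgne
  have hindep : LinearIndependent A (fun j => (⟨g (v j), hgvN j⟩ : ↥NA)) := by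
    have hrowseq : (fun j => ((Matrix.of v).map alg) j) =
        (fun j => (((⟨g (v j), hgvN j⟩ : ↥NA) : Fin s → A))) := by
      funext j; funext k; rfl
    rw [hrowseq] at hindep0
    exact LinearIndependent.of_comp NA.subtype hindep0
  have hcard : Fintype.card (Module.Free.ChooseBasisIndex A ↥NA) = s := by
    apply le_antisymm
    · have h3 : LinearIndependent A (fun i => ((bb i : ↥NA) : Fin s → A)) :=
        bb.linearIndependent.map' NA.subtype (Submodule.ker_subtype NA)
      have := (Pi.basisFun A (Fin s)).card_le_card_of_linearIndependent h3
      simpa using this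
    · have := bb.card_le_card_of_linearIndependent hindep
      simpa using this
  set e : Module.Free.ChooseBasisIndex A ↥NA ≃ Fin s := Fintype.equivFinOfCardEq hcard
    with he
  set b : Basis (Fin s) A ↥NA := bb.reindex e with hb
  -- matrices
  set C : Matrix (Fin s) (Fin s) A :=
    Matrix.of (fun i j => b.repr ⟨g (v j), hgvN j⟩ i) with hC
  set Brow : Matrix (Fin s) (Fin s) A :=
    Matrix.of (fun i k => ((b i : ↥NA) : Fin s → A) k) with hB
  have hBC : (Matrix.of v).map alg = Cᵀ * Brow := by
    ext j k
    have hsum := Basis.sum_repr b ⟨g (v j), hgvN j⟩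
    have hsum2 := congrArg (fun (z : ↥NA) => (z : Fin s → A) k) hsum
    simp only [Submodule.coe_sum, SetLike.val_smul, Finset.sum_apply, Pi.smul_apply,
      smul_eq_mul] at hsum2
    rw [Matrix.map_apply, Matrix.mul_apply]
    exact hsum2.symm
  have hdetBC : C.det * Brow.det = alg δ := by
    have hh := congrArg Matrix.det hBC
    rw [hMg, Matrix.det_mul, Matrix.det_transpose] at hh
    exact hh.symm
  have hCne : C.det ≠ 0 := fun h0 => halgδ (by rw [← hdetBC, h0, zero_mul])
  have hBrowne : Brow.det ≠ 0 := fun h0 => halgδ (by rw [← hdetBC, h0, mul_zero])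
  -- Part 1 : alg r * Brow.det ∈ (alg δ)
  set Jgen : Ideal A := Ideal.span (⇑alg ''
    {x | ∃ w0 : Fin s → (Fin s → R), (∀ i, w0 i ∈ N) ∧ x = (Matrix.of w0).det}) with hJgen
  have hδAJ : Brow.det ∈ Jgen := by
    have hgen : ∀ w0 : Fin s → (Fin s → A),
        (∀ i, w0 i ∈ g '' (N : Set (Fin s → R))) → (Matrix.of w0).det ∈ Jgen := by
      intro w0 hw0
      choose nn hnnN hnn using fun i => hw0 i
      have hWeq : Matrix.of w0 = (Matrix.of nn).map alg := by
        ext i k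
        show w0 i k = alg (nn i k)
        rw [← hnn i]
        rfl
      rw [hWeq, ← RingHom.mapMatrix_apply, ← RingHom.map_det]
      exact Ideal.subset_span ⟨(Matrix.of nn).det, ⟨nn, hnnN, rfl⟩, rfl⟩
    have hrows : ∀ i, (fun k => ((b i : ↥NA) : Fin s → A) k) ∈
        Submodule.span A (g '' (N : Set (Fin s → R))) := by
      intro i
      have : (fun k => ((b i : ↥NA) : Fin s → A) k) = ((b i : ↥NA) : Fin s → A) := rfl
      rw [this, ← hNAdef]
      exact (b i : ↥NA).2
    exact det_mem_of_rows_mem_span _ _ hgen _ hrows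
  have hrA : alg r * Brow.det ∈ Ideal.span {alg δ} := by
    have haux : ∀ y ∈ Jgen, alg r * y ∈ Ideal.span {alg δ} := by
      intro y hy
      induction hy using Submodule.span_induction with
      | mem x hx =>
        obtain ⟨x0, ⟨w0, hw0, rfl⟩, rfl⟩ := hx
        obtain ⟨q, hq⟩ := hr (Matrix.of w0).det (Ideal.subset_span ⟨w0, hw0, rfl⟩)
        rw [← map_mul, hq, map_mul]
        exact Ideal.mem_span_singleton'.mpr ⟨alg q, by ring⟩
      | zero => simp
      | add x y _ _ hx hy => rw [mul_add]; exact Ideal.add_mem _ hx hy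
      | smul a x _ hx =>
        rw [smul_eq_mul, mul_left_comm]
        exact Ideal.mul_mem_left _ _ hx
    exact haux _ hδAJ
  -- Part 2 : alg c ∈ (Brow.det)
  have hmemN : ∀ (x : Fin s → R), x ∈ N → g x ∈ NA :=
    fun x hx => Submodule.subset_span ⟨x, hx, rfl⟩
  set toNA : ↥N →ₗ[R] ↥(NA.restrictScalars R) :=
    LinearMap.codRestrict (NA.restrictScalars R) (g ∘ₗ N.subtype)
      (fun w => hmemN _ w.2) with htoNA
  set ψ : Fin s → (↥N →ₗ[R] A) := fun i =>
    ((b.coord i).restrictScalars R) ∘ₗ toNA with hψdef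
  have hψapply : ∀ i (w : ↥N), ψ i w = b.repr ⟨g (w : Fin s → R), hmemN _ w.2⟩ i :=
    fun i w => rfl
  obtain ⟨tden, htden⟩ := IsLocalization.exist_integer_multiples P.primeCompl
    (Finset.univ : Finset (Fin s × {x // x ∈ F}))
    (fun p => ψ p.1 ⟨(p.2 : Fin s → R), by
      rw [← hF]; exact Submodule.subset_span p.2.2⟩)
  have hrange : ∀ i (w : ↥N),
      (tden : R) • ψ i w ∈ LinearMap.range (Algebra.linearMap R A) := by
    intro i w
    have hmain : ∀ x, x ∈ Submodule.span R (F : Set (Fin s → R)) →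
        ∀ (hx : x ∈ N), (tden : R) • ψ i ⟨x, hx⟩ ∈
          LinearMap.range (Algebra.linearMap R A) := by
      intro x hxs
      induction hxs using Submodule.span_induction with
      | mem y hy =>
        intro hyN
        have h9 := htden (i, ⟨y, hy⟩) (Finset.mem_univ _)
        obtain ⟨z, hz⟩ := h9
        exact ⟨z, hz⟩
      | zero =>
        intro h0
        have : (⟨(0 : Fin s → R), h0⟩ : ↥N) = 0 := rfl
        rw [this, map_zero, smul_zero]
        exact zero_mem _
      | add y z hys hzs hy hz =>
        intro hyz
        have hyN : y ∈ N := by rw [← hF]; exact hys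
        have hzN : z ∈ N := by rw [← hF]; exact hzs
        have hsplit : (⟨y + z, hyz⟩ : ↥N) = ⟨y, hyN⟩ + ⟨z, hzN⟩ := rfl
        rw [hsplit, map_add, smul_add]
        exact add_mem (hy hyN) (hz hzN)
      | smul a y hys hy =>
        intro hay
        have hyN : y ∈ N := by rw [← hF]; exact hys
        have hsplit : (⟨a • y, hay⟩ : ↥N) = a • (⟨y, hyN⟩ : ↥N) := rfl
        rw [hsplit, map_smul, smul_comm]
        exact Submodule.smul_mem _ a (hy hyN)
    have hw' : (w : Fin s → R) ∈ Submodule.span R (F : Set (Fin s → R)) := by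
      rw [hF]; exact w.2
    have := hmain (w : Fin s → R) hw' w.2
    simpa using this
  have hηex : ∀ i (w : ↥N), ∃ z : R, alg z = (tden : R) • ψ i w := by
    intro i w
    obtain ⟨z, hz⟩ := hrange i w
    exact ⟨z, hz⟩
  choose ηf hηf using hηex
  set η : Fin s → Dual R ↥N := fun i =>
    { toFun := fun w => ηf i w
      map_add' := fun w1 w2 => halg (by
        simp only [map_add, hηf, smul_add])
      map_smul' := fun a w => halg (by
        simp only [RingHom.id_apply, hηf, map_smul, smul_eq_mul, map_mul,
          Algebra.smul_def]
        ring) } with hη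
  have hηapp : ∀ i (w : ↥N), alg (η i w) = (tden : R) • ψ i w := fun i w => hηf i w
  have hψVel : ∀ i j, ψ i (Vel N v hv j) = C i j := fun i j => rfl
  obtain ⟨q0, hq0⟩ := hc η
  have h7 : alg (Dalt N v hv η) = (alg (tden : R)) ^ s * C.det := by
    rw [Dalt_apply, RingHom.map_det]
    have hmm : (alg.mapMatrix (Matrix.of fun i j => η i (Vel N v hv j)))
        = (alg (tden : R)) • C := by
      ext i j
      simp only [RingHom.mapMatrix_apply, Matrix.map_apply, Matrix.of_apply,
        Matrix.smul_apply, smul_eq_mul]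
      rw [hηapp, hψVel, Algebra.smul_def]
    rw [hmm, Matrix.det_smul, Fintype.card_fin]
  have hcancel : alg c * (alg (tden : R)) ^ s = Brow.det * alg q0 := by
    have h8 := congrArg alg hq0
    rw [map_mul, map_mul, h7] at h8
    apply mul_left_cancel₀ hCne
    calc C.det * (alg c * (alg (tden : R)) ^ s)
        = alg c * ((alg (tden : R)) ^ s * C.det) := by ring
      _ = alg δ * alg q0 := h8
      _ = (C.det * Brow.det) * alg q0 := by rw [hdetBC]
      _ = C.det * (Brow.det * alg q0) := by ring
  have hu : IsUnit ((alg (tden : R)) ^ s) := (IsLocalization.map_units A tden).pow s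
  obtain ⟨uu, huu⟩ := hu
  have hcA : ∃ e2 : A, e2 * Brow.det = alg c := by
    refine ⟨alg q0 * ↑uu⁻¹, ?_⟩
    calc alg q0 * ↑uu⁻¹ * Brow.det = (Brow.det * alg q0) * ↑uu⁻¹ := by ring
      _ = (alg c * ↑uu) * ↑uu⁻¹ := by rw [← hcancel, huu]
      _ = alg c := Units.mul_inv_cancel_right _ _
  obtain ⟨e2, he2⟩ := hcA
  obtain ⟨e1, he1⟩ := Ideal.mem_span_singleton'.mp hrA
  refine Ideal.mem_span_singleton'.mpr ⟨e2 * e1, ?_⟩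
  rw [map_mul]
  calc e2 * e1 * alg δ = e2 * (e1 * alg δ) := by ring
    _ = e2 * (alg r * Brow.det) := by rw [he1]
    _ = (e2 * Brow.det) * alg r := by ring
    _ = alg c * alg r := by rw [he2]

end LocalStep
end CharFitt

namespace CharFitt

section KeyNormality

open scoped Matrix

set_option maxHeartbeats 1000000 in
lemma key_normality {R : Type*} [CommRing R] [IsDomain R] [IsIntegrallyClosed R]
    [IsNoetherianRing R] {s : ℕ}
    (N : Submodule R (Fin s → R)) (v : Fin s → Fin s → R) (hv : ∀ i, v i ∈ N)
    (hd : (Matrix.of v).det ≠ 0)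
    {c r : R}
    (hc : ∀ η : Fin s → Dual R ↥N, (Matrix.of v).det ∣ c * Dalt N v hv η)
    (hr : ∀ x ∈ fittIdealAux R s N, (Matrix.of v).det ∣ r * x) :
    (Matrix.of v).det ∣ c * r := by
  classical
  set δ := (Matrix.of v).det with hδdef
  by_contra hab
  obtain ⟨P, u, hP, hPa, hbu, hPu⟩ := exists_prime_colon hab
  haveI := hP
  set A := Localization.AtPrime P with hA
  haveI : IsNoetherianRing A := IsLocalization.isNoetherianRing P.primeCompl A inferInstance
  haveI : IsIntegrallyClosed A :=
    isIntegrallyClosed_of_isLocalization A P.primeCompl P.primeCompl_le_nonZeroDivisors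
  have halg : Function.Injective (algebraMap R A) :=
    IsLocalization.injective A P.primeCompl_le_nonZeroDivisors
  set alg := algebraMap R A with halgdef
  have hune : u ≠ 0 := fun h => hbu (h ▸ dvd_zero δ)
  have hu'ne : alg u ≠ 0 := fun h => hune (halg (by rw [h, map_zero]))
  have hδ'ne : alg δ ≠ 0 := fun h => hd (halg (by rw [h, map_zero]))
  have hδP : δ ∈ P := (hPu δ).mpr (Ideal.mem_span_singleton'.mpr ⟨u, rfl⟩)
  set m := IsLocalRing.maximalIdeal A with hm
  have H1 : ∀ z ∈ m, ∃ q : A, alg u * z = alg δ * q := by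
    intro z hz
    rw [hm, ← Localization.AtPrime.map_eq_maximalIdeal] at hz
    have hz' : z ∈ Ideal.span (⇑alg '' (P : Set R)) := hz
    clear hz
    induction hz' using Submodule.span_induction with
    | mem x hx =>
      obtain ⟨p, hp, rfl⟩ := hx
      obtain ⟨q, hq⟩ := Ideal.mem_span_singleton'.mp ((hPu p).mp hp)
      exact ⟨alg q, by rw [← map_mul, ← hq, map_mul, mul_comm (alg q)]⟩
    | zero => exact ⟨0, by simp⟩
    | add x y _ _ hx hy =>
      obtain ⟨q1, h1⟩ := hx; obtain ⟨q2, h2⟩ := hy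
      exact ⟨q1 + q2, by rw [mul_add, h1, h2, mul_add]⟩
    | smul a x _ hx =>
      obtain ⟨q1, h1⟩ := hx
      exact ⟨a * q1, by rw [smul_eq_mul, mul_left_comm, h1, mul_left_comm]⟩
  have H1' : ∀ z : ↥m, ∃ q : A, alg u * (z : A) = alg δ * q := fun z => H1 z z.2
  choose Lf hLf using H1'
  set Lmap : ↥m →ₗ[A] A :=
    { toFun := Lf
      map_add' := fun z1 z2 => by
        apply mul_left_cancel₀ hδ'ne
        rw [← hLf, Submodule.coe_add, mul_add, mul_add, ← hLf, ← hLf]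
      map_smul' := fun a z => by
        simp only [RingHom.id_apply]
        apply mul_left_cancel₀ hδ'ne
        rw [smul_eq_mul, mul_left_comm, ← hLf, ← hLf, SetLike.val_smul, smul_eq_mul,
          mul_left_comm] } with hLmap
  have hLspec : ∀ z : ↥m, alg u * (z : A) = alg δ * Lmap z := fun z => hLf z
  by_cases hT : LinearMap.range Lmap = ⊤
  · -- principal case
    have h1 : (1 : A) ∈ LinearMap.range Lmap := hT ▸ Submodule.mem_top
    obtain ⟨z₀, hz₀⟩ := LinearMap.mem_range.mp h1
    have huz₀ : alg u * (z₀ : A) = alg δ := by rw [hLspec, hz₀, mul_one]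
    have hprin : m = Ideal.span {(z₀ : A)} := by
      apply le_antisymm
      · intro z hz
        refine Ideal.mem_span_singleton'.mpr ⟨Lmap ⟨z, hz⟩, ?_⟩
        apply mul_left_cancel₀ hu'ne
        calc alg u * (Lmap ⟨z, hz⟩ * (z₀ : A))
            = Lmap ⟨z, hz⟩ * (alg u * (z₀ : A)) := by ring
          _ = Lmap ⟨z, hz⟩ * alg δ := by rw [huz₀]
          _ = alg δ * Lmap ⟨z, hz⟩ := by ring
          _ = alg u * z := (hLspec ⟨z, hz⟩).symm
      · rw [Ideal.span_le, Set.singleton_subset_iff]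
        exact z₀.2
    have hip : (IsLocalRing.maximalIdeal A).IsPrincipal := ⟨⟨(z₀ : A), hprin⟩⟩
    haveI : IsPrincipalIdealRing A :=
      ((tfae_of_isNoetherianRing_of_isLocalRing_of_isDomain A).out 4 0).mp hip
    have hdvd := local_divisibility N v hv hd P A hc hr
    obtain ⟨qq, hqq⟩ := Ideal.mem_span_singleton'.mp hdvd
    obtain ⟨⟨ee, ww⟩, hmk⟩ : ∃ x : R × P.primeCompl, IsLocalization.mk' A x.1 x.2 = qq :=
      IsLocalization.mk'_surjective P.primeCompl qq
    have hspec : qq * alg (ww : R) = alg ee := by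
      rw [← hmk]; exact IsLocalization.mk'_spec A ee ww
    have heq1 : alg (c * r * (ww : R)) = alg (δ * ee) := by
      calc alg (c * r * (ww : R)) = alg (c * r) * alg (ww : R) := by rw [map_mul]
        _ = (qq * alg δ) * alg (ww : R) := by rw [← hqq]
        _ = (qq * alg (ww : R)) * alg δ := by ring
        _ = alg ee * alg δ := by rw [hspec]
        _ = alg (δ * ee) := by rw [map_mul]; ring
    have heq2 : c * r * (ww : R) = δ * ee := halg heq1
    have hwP : (ww : R) ∈ P :=
      hPa _ (Ideal.mem_span_singleton'.mpr ⟨ee, by rw [mul_comm]; exact heq2.symm⟩)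
    exact ww.2 hwP
  · -- non-principal case, get a contradiction via integral closedness
    have hTm : LinearMap.range Lmap ≤ m := IsLocalRing.le_maximalIdeal hT
    set K' := FractionRing A with hK'
    letI : Algebra A K' := OreLocalization.instAlgebra
    have halg' : Function.Injective (algebraMap A K') := IsFractionRing.injective A K'
    set N' : Submodule A K' := Submodule.map (Algebra.linearMap A K') m with hN'
    have hN'fg : N'.FG := (IsNoetherian.noetherian m).map _
    have hδm : alg δ ∈ m := by
      rw [hm]
      exact (IsLocalization.AtPrime.to_map_mem_maximal_iff A P δ).mpr hδP
    have hN'ne : N' ≠ ⊥ := by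
      intro h0
      have h1 : algebraMap A K' (alg δ) ∈ N' := ⟨alg δ, hδm, rfl⟩
      rw [h0, Submodule.mem_bot] at h1
      exact hδ'ne (halg' (by rw [h1, map_zero]))
    have hδK : algebraMap A K' (alg δ) ≠ 0 := fun h => hδ'ne (halg' (by rw [h, map_zero]))
    set τ : K' := IsLocalization.mk' K' (alg u)
      (⟨alg δ, mem_nonZeroDivisors_of_ne_zero hδ'ne⟩ : nonZeroDivisors A) with hτ
    have hτspec : τ * algebraMap A K' (alg δ) = algebraMap A K' (alg u) :=
      IsLocalization.mk'_spec K' (alg u) _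
    have hτmul : ∀ z : ↥m, τ * algebraMap A K' (z : A) = algebraMap A K' (Lmap z) := by
      intro z
      apply mul_left_cancel₀ hδK
      calc algebraMap A K' (alg δ) * (τ * algebraMap A K' (z : A))
          = (τ * algebraMap A K' (alg δ)) * algebraMap A K' (z : A) := by ring
        _ = algebraMap A K' (alg u * (z : A)) := by rw [hτspec, ← map_mul]
        _ = algebraMap A K' (alg δ * Lmap z) := by rw [hLspec]
        _ = algebraMap A K' (alg δ) * algebraMap A K' (Lmap z) := by rw [map_mul]
    have hstab : ∀ n ∈ N', τ • n ∈ N' := by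
      rintro _ ⟨z, hz, rfl⟩
      refine ⟨Lmap ⟨z, hz⟩, hTm ⟨⟨z, hz⟩, rfl⟩, ?_⟩
      rw [smul_eq_mul]
      exact (hτmul ⟨z, hz⟩).symm
    have hint : IsIntegral A τ := isIntegral_of_smul_mem_submodule N' hN'ne hN'fg τ hstab
    obtain ⟨y, hy⟩ := IsIntegrallyClosed.isIntegral_iff.mp hint
    have heq0 : algebraMap A K' (alg δ * y) = algebraMap A K' (alg u) := by
      rw [map_mul, hy, mul_comm, hτspec]
    have huy : alg δ * y = alg u := halg' heq0
    obtain ⟨⟨ee, ww⟩, hmk⟩ : ∃ x : R × P.primeCompl, IsLocalization.mk' A x.1 x.2 = y :=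
      IsLocalization.mk'_surjective P.primeCompl y
    have hspec : y * alg (ww : R) = alg ee := by
      rw [← hmk]; exact IsLocalization.mk'_spec A ee ww
    have heq1 : alg (u * (ww : R)) = alg (δ * ee) := by
      rw [map_mul, ← huy, map_mul, mul_assoc, hspec]
    have heq2 : u * (ww : R) = δ * ee := halg heq1
    have hwP : (ww : R) ∈ P :=
      (hPu (ww : R)).mpr (Ideal.mem_span_singleton'.mpr ⟨ee, by rw [mul_comm]; exact heq2.symm⟩)
    exact ww.2 hwP

end KeyNormality
end CharFitt

namespace CharFitt

section Degenerate

open scoped Matrix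

variable {R : Type*} [CommRing R] {s : ℕ}

lemma range_bidual_bot {I : Ideal R} (hI : I ≤ ⊥) :
    LinearMap.range (bidualToRing R I) = ⊥ := by
  have hι : (Submodule.subtype I).dualMap (LinearMap.id : R →ₗ[R] R) = 0 := by
    ext x
    exact Submodule.mem_bot R |>.mp (hI x.2)
  rw [LinearMap.range_eq_bot]
  ext φ
  show φ ((Submodule.subtype I).dualMap (LinearMap.id : R →ₗ[R] R)) = 0
  rw [hι, map_zero]

lemma fitt_le_bot (N : Submodule R (Fin s → R))
    (h : ∀ w : Fin s → (Fin s → R), (∀ i, w i ∈ N) → (Matrix.of w).det = 0) :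
    fittIdealAux R s N ≤ ⊥ := by
  rw [fittIdealAux, Ideal.span_le]
  rintro x ⟨w, hw, rfl⟩
  rw [SetLike.mem_coe, Submodule.mem_bot]
  exact h w hw

set_option maxHeartbeats 1000000 in
lemma char_le_bot [IsDomain R] (N : Submodule R (Fin s → R))
    (h : ∀ w : Fin s → (Fin s → R), (∀ i, w i ∈ N) → (Matrix.of w).det = 0) :
    charIdealAux R s N ≤ ⊥ := by
  classical
  set K := FractionRing R with hK
  have halg : Function.Injective (algebraMap R K) := IsFractionRing.injective R K
  set gK : (Fin s → R) →ₗ[R] (Fin s → K) :=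
    LinearMap.pi (fun k => (Algebra.linearMap R K).comp (LinearMap.proj k)) with hgK
  set W : Submodule K (Fin s → K) := Submodule.span K (gK '' (N : Set (Fin s → R))) with hW
  -- W is a proper subspace
  have hWne : W ≠ ⊤ := by
    intro htop
    obtain ⟨bset, hsub, hspan, hindep⟩ :=
      exists_linearIndependent K (gK '' (N : Set (Fin s → R)))
    have hspan2 : ⊤ ≤ Submodule.span K (Set.range (fun x : ↥bset => (x : Fin s → K))) := by
      rw [Subtype.range_coe_subtype, Set.setOf_mem_eq, hspan, ← hW, htop]
    set bb : Basis ↥bset K (Fin s → K) := Basis.mk hindep hspan2 with hbb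
    haveI : Fintype ↥bset := FiniteDimensional.fintypeBasisIndex bb
    have hcard : Fintype.card ↥bset = s := by
      have h1 := Module.finrank_eq_card_basis bb
      rw [finrank_pi, Fintype.card_fin] at h1
      omega
    set e : Fin s ≃ ↥bset := (Fintype.equivFinOfCardEq hcard).symm with he
    set bb' : Basis (Fin s) K (Fin s → K) := bb.reindex e.symm with hbb'
    have hpre : ∀ x : ↥bset, ∃ n : Fin s → R, n ∈ N ∧ gK n = (x : Fin s → K) := by
      intro x
      obtain ⟨n, hn, hgn⟩ := hsub x.2
      exact ⟨n, hn, hgn⟩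
    choose nn hnnN hnn using hpre
    have hunit : IsUnit ((Pi.basisFun K (Fin s)).det ⇑bb') := Basis.isUnit_det _ _
    have hbb'co : ∀ j, (bb' j : Fin s → K) = gK (nn (e j)) := by
      intro j
      rw [hbb', Basis.coe_reindex]
      show (bb (e.symm.symm j) : Fin s → K) = _
      rw [Equiv.symm_symm, hbb, Basis.coe_mk]
      exact (hnn (e j)).symm
    have hdetmat : (Pi.basisFun K (Fin s)).det ⇑bb'
        = ((Matrix.of (fun j i => (algebraMap R K) (nn (e j) i)))ᵀ).det := by
      rw [Basis.det_apply]
      congr 1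
      ext i j
      show (bb' j : Fin s → K) i = _
      rw [hbb'co]
      rfl
    rw [hdetmat, Matrix.det_transpose] at hunit
    have hzero : (Matrix.of (fun j i => (algebraMap R K) (nn (e j) i))).det = 0 := by
      have : Matrix.of (fun j i => (algebraMap R K) (nn (e j) i))
          = (algebraMap R K).mapMatrix (Matrix.of (fun j => nn (e j))) := rfl
      rw [this, ← RingHom.map_det, h (fun j => nn (e j)) (fun j => hnnN (e j)), map_zero]
    rw [hzero] at hunit
    exact hunit.ne_zero rfl
  -- coordinate functionals on W are linearly dependent
  haveI : FiniteDimensional K ↥W := inferInstance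
  have hltW : Module.finrank K ↥W < s := by
    have h2 : W < ⊤ := lt_top_iff_ne_top.mpr hWne
    have := Submodule.finrank_lt h2.ne
    rwa [finrank_pi, Fintype.card_fin] at this
  set q : Fin s → Module.Dual K ↥W :=
    fun i => (LinearMap.proj i : (Fin s → K) →ₗ[K] K) ∘ₗ W.subtype with hq
  have hdep : ¬ LinearIndependent K q := by
    intro hind
    have hle := hind.fintype_card_le_finrank
    rw [Fintype.card_fin, Subspace.dual_finrank_eq] at hle
    omega
  obtain ⟨coef, hcoefsum, i0, hi0⟩ := Fintype.not_linearIndependent_iff.mp hdep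
  obtain ⟨tt, htt⟩ :=
    IsLocalization.exist_integer_multiples (nonZeroDivisors R) Finset.univ coef
  have htt' : ∀ i, ∃ z : R, algebraMap R K z = (tt : R) • coef i := by
    intro i
    obtain ⟨z, hz⟩ := htt i (Finset.mem_univ i)
    exact ⟨z, hz⟩
  choose rr hrr using htt'
  have httne : algebraMap R K (tt : R) ≠ 0 := fun h0 =>
    nonZeroDivisors.coe_ne_zero tt (halg (by rw [h0, map_zero]))
  have hri0 : rr i0 ≠ 0 := by
    intro h0
    apply hi0
    have := hrr i0
    rw [h0, map_zero] at this
    have h2 : algebraMap R K (tt : R) * coef i0 = 0 := by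
      rw [← Algebra.smul_def]; exact this.symm
    rcases mul_eq_zero.mp h2 with h3 | h3
    · exact absurd h3 httne
    · exact h3
  -- the corresponding relation among the restricted coordinate functionals
  have hgKmem : ∀ w : ↥N, gK (w : Fin s → R) ∈ W :=
    fun w => Submodule.subset_span ⟨(w : Fin s → R), w.2, rfl⟩
  have hsum : ∑ i, rr i • pN N i = 0 := by
    ext w
    apply halg
    simp only [LinearMap.zero_apply, map_zero]
    have h4 : ∀ i, (pN N i) w = (w : Fin s → R) i := fun i => rfl
    have h5 := congrArg (fun (φ : Module.Dual K ↥W) => φ ⟨gK (w : Fin s → R), hgKmem w⟩)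
      hcoefsum
    simp only [LinearMap.coe_sum, Finset.sum_apply, LinearMap.smul_apply,
      LinearMap.zero_apply, smul_eq_mul] at h5
    have h6 : ∀ i, (q i) ⟨gK (w : Fin s → R), hgKmem w⟩ = algebraMap R K ((w : Fin s → R) i) :=
      fun i => rfl
    simp only [h6] at h5
    show algebraMap R K ((∑ i, rr i • pN N i) w) = 0
    simp only [LinearMap.coe_sum, Finset.sum_apply, LinearMap.smul_apply, smul_eq_mul] at *
    rw [map_sum]
    have h7 : ∀ i, algebraMap R K (rr i * (pN N i) w)
        = algebraMap R K (tt : R) * (coef i * algebraMap R K ((w : Fin s → R) i)) := by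
      intro i
      rw [map_mul, hrr i, h4 i, Algebra.smul_def]
      ring
    rw [Finset.sum_congr rfl (fun i _ => h7 i), ← Finset.mul_sum, h5, mul_zero]
  -- conclude
  intro c hc
  obtain ⟨Λ, rfl⟩ := (mem_charIdealAux_iff N).mp hc
  rw [Submodule.mem_bot]
  have hzero : Λ (Function.update (pN N) i0 (∑ i, rr i • pN N i)) = 0 := by
    rw [hsum]
    exact Λ.map_coord_zero i0 (Function.update_self i0 0 (pN N))
  have hexp : Λ (Function.update (pN N) i0 (∑ i, rr i • pN N i))
      = ∑ i, rr i • Λ (Function.update (pN N) i0 (pN N i)) := by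
    have h9 := Λ.toMultilinearMap.map_update_sum Finset.univ i0
      (fun i => rr i • pN N i) (pN N)
    calc Λ (Function.update (pN N) i0 (∑ i, rr i • pN N i))
        = ∑ i, Λ (Function.update (pN N) i0 (rr i • pN N i)) := h9
      _ = ∑ i, rr i • Λ (Function.update (pN N) i0 (pN N i)) :=
          Finset.sum_congr rfl fun i _ => Λ.map_update_smul _ i0 (rr i) (pN N i)
  have hvanish : ∀ i, i ≠ i0 → Λ (Function.update (pN N) i0 (pN N i)) = 0 := by
    intro i hi
    refine Λ.map_eq_zero_of_eq _ (i := i0) (j := i) ?_ (Ne.symm hi)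
    rw [Function.update_self, Function.update_of_ne hi]
  have hfinal : (0 : R) = rr i0 • Λ (pN N) := by
    rw [← hzero, hexp]
    rw [Finset.sum_eq_single i0]
    · rw [Function.update_eq_self]
    · intro i _ hi
      rw [hvanish i hi, smul_zero]
    · intro hmem
      exact absurd (Finset.mem_univ i0) hmem
  rcases smul_eq_zero.mp hfinal.symm with h8 | h8
  · exact absurd h8 hri0
  · exact h8

end Degenerate
end CharFitt

open CharFitt in
/-- Over a noetherian normal domain, the characteristic ideal of a finitely generated module
equals the reflexive hull `(Fitt⁰_R(M))**` of its zeroth Fitting ideal. -/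
theorem char_eq_reflexive_hull_of_fitt (R : Type*) [CommRing R] [IsDomain R]
    [IsIntegrallyClosed R] [IsNoetherianRing R]
    (M : Type*) [AddCommGroup M] [Module R M] [Module.Finite R M]
    (s : ℕ) (hs : 0 < s) (π : (Fin s → R) →ₗ[R] M) (hπ : Function.Surjective π) :
    charIdealAux R s (LinearMap.ker π)
      = LinearMap.range (bidualToRing R (fittIdealAux R s (LinearMap.ker π))) := by
  classical
  set N := LinearMap.ker π with hN
  by_cases hex : ∃ v : Fin s → (Fin s → R), (∀ i, v i ∈ N) ∧ (Matrix.of v).det ≠ 0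
  · obtain ⟨v, hv, hd⟩ := hex
    have hs' : s ≠ 0 := hs.ne'
    apply le_antisymm
    · intro c hc
      apply mem_range_bidual N v hd (det_mem_fitt N v hv)
      intro r hr
      exact key_normality N v hv hd (fun η => char_subset_div N v hv hd hc η) hr
    · intro t ht
      apply div_subset_char N v hv hd
      intro η
      exact range_bidual_subset N v hd (det_mem_fitt N v hv) ht (Dalt N v hv η)
        (dalt_colon N v hv hd hs' η)
  · push_neg at hex
    have hall : ∀ w : Fin s → (Fin s → R), (∀ i, w i ∈ N) → (Matrix.of w).det = 0 := by
      intro w hw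
      by_contra h0
      exact h0 (hex w hw)
    have h1 : charIdealAux R s N = ⊥ := le_bot_iff.mp (char_le_bot N hall)
    have h2 : LinearMap.range (bidualToRing R (fittIdealAux R s N)) = ⊥ :=
      range_bidual_bot (fitt_le_bot N hall)
    rw [h1, h2]
end

section
/- Let R be a noetherian commutative ring satisfying conditions (G₀) and (S₂), let M be a finitely generated torsion R-module, and let r ∈ R be a regular element of R that is also M-regular. Then char_R(M) ∩ rR = r·char_R(M). -/
open Module

open Module

section AuxB
variable {R : Type*} [CommRing R] {s : ℕ} {N : Submodule R (Fin s → R)} {a : R}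

/-- projections restricted to N -/
noncomputable def pjN (N : Submodule R (Fin s → R)) (i : Fin s) : Module.Dual R N :=
  (LinearMap.proj i).comp N.subtype

noncomputable def CmatN (haN : ∀ j, a • (Pi.single j 1 : Fin s → R) ∈ N)
    (g : Fin s → Module.Dual R N) : Matrix (Fin s) (Fin s) R :=
  Matrix.of fun i j => g i ⟨a • (Pi.single j 1 : Fin s → R), haN j⟩

lemma smul_dual_eq_sum (haN : ∀ j, a • (Pi.single j 1 : Fin s → R) ∈ N)
    (g : Fin s → Module.Dual R N) (i : Fin s) :
    a • g i = ∑ j, (CmatN haN g) i j • pjN N j := by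
  classical
  ext n
  have hsum : a • n = ∑ j, ((n : Fin s → R) j) • (⟨a • (Pi.single j 1 : Fin s → R), haN j⟩ : N) := by
    apply Subtype.ext
    rw [Submodule.coe_sum]
    funext l
    rw [Finset.sum_apply]
    have : ∀ j, (((n : Fin s → R) j • (⟨a • (Pi.single j 1 : Fin s → R), haN j⟩ : N)) : N).val l
        = (n : Fin s → R) j * (a * (Pi.single j 1 : Fin s → R) l) := by
      intro j; simp [Submodule.coe_smul]
    rw [Finset.sum_congr rfl (fun j _ => this j)]
    rw [Finset.sum_eq_single l]
    · simp [mul_comm]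
    · intro b _ hb; simp [Pi.single_apply, hb]
    · simp
  calc (a • g i) n = a • (g i n) := rfl
    _ = g i (a • n) := (map_smul (g i) a n).symm
    _ = g i (∑ j, ((n : Fin s → R) j) • (⟨a • (Pi.single j 1 : Fin s → R), haN j⟩ : N)) := by rw [hsum]
    _ = ∑ j, ((n : Fin s → R) j) • g i (⟨a • (Pi.single j 1 : Fin s → R), haN j⟩ : N) := by
        rw [map_sum]; exact Finset.sum_congr rfl fun j _ => map_smul (g i) _ _
    _ = (∑ j, (CmatN haN g) i j • pjN N j) n := by
        rw [LinearMap.sum_apply]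
        refine Finset.sum_congr rfl fun j _ => ?_
        simp [CmatN, pjN, smul_eq_mul, mul_comm]

lemma mem_charIdealAux_iff {x : R} :
    x ∈ charIdealAux R s N ↔ ∃ φ : ExtBidual R N s, φ (pjN N) = x := by
  have key : ∀ φ : ExtBidual R N s,
      ((extEval R s) ∘ₗ (extBidualMap R s N.subtype)) φ = φ (pjN N) := fun φ => rfl
  constructor
  · rintro ⟨φ, rfl⟩; exact ⟨φ, (key φ).symm⟩
  · rintro ⟨φ, hφ⟩; exact ⟨φ, (key φ).trans hφ⟩

end AuxB

section AuxC
variable {R : Type*} [CommRing R] {s : ℕ} {N : Submodule R (Fin s → R)} {a : R}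

lemma altMap_combo {M : Type*} [AddCommGroup M] [Module R M]
    (φ : M [⋀^Fin s]→ₗ[R] R) (v : Fin s → M) (C : Matrix (Fin s) (Fin s) R) :
    φ (fun i => ∑ j, C i j • v j) = C.det • φ v := by
  classical
  let f : (Fin s → R) →ₗ[R] M := Fintype.linearCombination R v
  let ψ : (Fin s → R) [⋀^Fin s]→ₗ[R] R := φ.compLinearMap f
  have hb : ψ = ψ (Pi.basisFun R (Fin s)) • (Pi.basisFun R (Fin s)).det :=
    ψ.eq_smul_basis_det _
  have h1 : ψ (fun i => C i) = φ (fun i => ∑ j, C i j • v j) := by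
    simp [ψ, f, AlternatingMap.compLinearMap_apply, Fintype.linearCombination_apply]
  have h2 : ψ ⇑(Pi.basisFun R (Fin s)) = φ v := by
    simp only [ψ, f, AlternatingMap.compLinearMap_apply]
    congr 1
    funext i
    rw [Fintype.linearCombination_apply]
    rw [Finset.sum_eq_single i]
    · simp
    · intro b _ hb; simp [Pi.basisFun_apply, Pi.single_apply, hb]
    · simp
  have htm : (Pi.basisFun R (Fin s)).toMatrix (fun i => C i) = C.transpose := by
    ext i j
    simp [Basis.toMatrix_apply]
  have h3 : (Pi.basisFun R (Fin s)).det (fun i => C i) = C.det := by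
    rw [Basis.det_apply, htm, Matrix.det_transpose]
  calc φ (fun i => ∑ j, C i j • v j) = ψ (fun i => C i) := h1.symm
    _ = (ψ ⇑(Pi.basisFun R (Fin s)) • (Pi.basisFun R (Fin s)).det) (fun i => C i) := by rw [← hb]
    _ = C.det • φ v := by rw [AlternatingMap.smul_apply, h3, h2, smul_eq_mul, smul_eq_mul, mul_comm]

lemma charIdeal_sub_div (haN : ∀ j, a • (Pi.single j 1 : Fin s → R) ∈ N)
    {x : R} (hx : x ∈ charIdealAux R s N) (g : Fin s → Module.Dual R N) :
    ∃ w, x * (CmatN haN g).det = a ^ s * w := by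
  obtain ⟨φ, hφ⟩ := mem_charIdealAux_iff.mp hx
  refine ⟨φ g, ?_⟩
  have h1 : φ (fun i => a • g i) = (a ^ s) • φ g := by
    have h := φ.toMultilinearMap.map_smul_univ (fun _ : Fin s => a) g
    simpa [Finset.prod_const, Finset.card_univ] using h
  have h2 : φ (fun i => a • g i) = (CmatN haN g).det • φ (pjN N) := by
    have hfn : (fun i => a • g i) = fun i => ∑ j, (CmatN haN g) i j • pjN N j := by
      funext i; exact smul_dual_eq_sum haN g i
    rw [hfn, altMap_combo]
  rw [hφ] at h2
  rw [h1] at h2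
  rw [smul_eq_mul, smul_eq_mul] at h2
  rw [mul_comm x _, h2.symm]

lemma CmatN_update (haN : ∀ j, a • (Pi.single j 1 : Fin s → R) ∈ N)
    (g : Fin s → Module.Dual R N) (i : Fin s) (f : Module.Dual R N) :
    CmatN haN (Function.update g i f) =
      Matrix.updateRow (CmatN haN g) i
        (fun j => f ⟨a • (Pi.single j 1 : Fin s → R), haN j⟩) := by
  ext i' j
  rw [Matrix.updateRow_apply]
  by_cases h : i' = i
  · subst h; simp [CmatN]
  · simp [CmatN, Function.update_apply, h]

lemma div_sub_charIdeal (haN : ∀ j, a • (Pi.single j 1 : Fin s → R) ∈ N)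
    (ha : a ∈ nonZeroDivisors R) {x : R}
    (hx : ∀ g : Fin s → Module.Dual R N, ∃ w, x * (CmatN haN g).det = a ^ s * w) :
    x ∈ charIdealAux R s N := by
  have has : a ^ s ∈ nonZeroDivisors R := pow_mem ha s
  have hcancel : ∀ {X Y : R}, a ^ s * X = a ^ s * Y → X = Y := fun h =>
    (mul_cancel_left_mem_nonZeroDivisors has).mp h
  set W : (Fin s → Module.Dual R N) → R := fun g => (hx g).choose with hWdef
  have hW : ∀ g, x * (CmatN haN g).det = a ^ s * W g := fun g => (hx g).choose_spec
  refine mem_charIdealAux_iff.mpr ⟨⟨⟨W, ?_, ?_⟩, ?_⟩, ?_⟩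
  · -- map_update_add'
    intro inst g i f₁ f₂
    obtain rfl : inst = instDecidableEqFin s := Subsingleton.elim _ _
    apply hcancel
    have h1 := hW (Function.update g i (f₁ + f₂))
    have h2 := hW (Function.update g i f₁)
    have h3 := hW (Function.update g i f₂)
    rw [CmatN_update] at h1 h2 h3
    have hrow : (fun j => (f₁ + f₂) ⟨a • (Pi.single j 1 : Fin s → R), haN j⟩)
        = (fun j => f₁ ⟨a • (Pi.single j 1 : Fin s → R), haN j⟩)
          + (fun j => f₂ ⟨a • (Pi.single j 1 : Fin s → R), haN j⟩) := by
      funext j; simp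
    rw [hrow, Matrix.det_updateRow_add] at h1
    linear_combination h2 + h3 - h1
  · -- map_update_smul'
    intro inst g i c f
    obtain rfl : inst = instDecidableEqFin s := Subsingleton.elim _ _
    apply hcancel
    have h1 := hW (Function.update g i (c • f))
    have h2 := hW (Function.update g i f)
    rw [CmatN_update] at h1 h2
    have hrow : (fun j => (c • f) ⟨a • (Pi.single j 1 : Fin s → R), haN j⟩)
        = c • (fun j => f ⟨a • (Pi.single j 1 : Fin s → R), haN j⟩) := by
      funext j; simp
    rw [hrow, Matrix.det_updateRow_smul] at h1
    rw [smul_eq_mul]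
    linear_combination c * h2 - h1
  · -- alternating
    intro v i j hveq hne
    apply hcancel
    have h1 := hW v
    have hdet : (CmatN haN v).det = 0 := by
      apply Matrix.det_zero_of_row_eq hne
      funext l
      show v i _ = v j _
      rw [hveq]
    rw [hdet, mul_zero] at h1
    rw [mul_zero]
    exact h1.symm
  · -- value at pjN
    show W (pjN N) = x
    apply hcancel
    have h1 := hW (pjN N)
    have hC : CmatN haN (pjN N) = Matrix.diagonal (fun _ : Fin s => a) := by
      ext i j
      rw [Matrix.diagonal_apply]
      show ((a • (Pi.single j 1 : Fin s → R)) i) = _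
      rw [Pi.smul_apply, Pi.single_apply, smul_eq_mul]
      by_cases h : i = j <;> simp [h]
    rw [hC, Matrix.det_diagonal, Finset.prod_const, Finset.card_univ, Fintype.card_fin] at h1
    rw [← h1]
    ring
end AuxC

section AuxD
open Pointwise
variable {R : Type*} [CommRing R]

lemma two_le_height_of_chain {x y z : PrimeSpectrum R} (h1 : x < y) (h2 : y < z) :
    2 ≤ Order.height z := by
  let p : LTSeries (PrimeSpectrum R) :=
    ((RelSeries.singleton {(a, b) : PrimeSpectrum R × PrimeSpectrum R | a < b} x).snoc y (by simpa using h1)).snoc z (by simpa using h2)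
  have hlast : p.last = z := by simp [p]
  have := Order.length_le_height_last (p := p)
  rw [hlast] at this
  simpa [p] using this

lemma no_chain_below_regular {a : R} (ha : a ∈ nonZeroDivisors R)
    {q P : Ideal R} (hq : q.IsPrime) (hP : P.IsPrime) (haq : a ∈ q) (hlt : q < P)
    (hht : Order.height (⟨P, hP⟩ : PrimeSpectrum R) ≤ 1) : False := by
  have hnil : algebraMap R (Localization.AtPrime q) a ∈ nilradical (Localization.AtPrime q) := by
    rw [nilradical_eq_sInf, Ideal.mem_sInf]
    intro J hJ
    haveI hJ' : J.IsPrime := hJ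
    have hle : J.comap (algebraMap R (Localization.AtPrime q)) ≤ q := by
      intro t ht
      by_contra htq
      have hunit : IsUnit (algebraMap R (Localization.AtPrime q) t) :=
        IsLocalization.map_units (Localization.AtPrime q) (⟨t, htq⟩ : q.primeCompl)
      exact hJ'.ne_top (J.eq_top_of_isUnit_mem ht hunit)
    have heq : J.comap (algebraMap R (Localization.AtPrime q)) = q := by
      rcases eq_or_lt_of_le hle with h | h
      · exact h
      · exfalso
        have h2 : (⟨J.comap (algebraMap R (Localization.AtPrime q)), hJ'.comap _⟩ :
            PrimeSpectrum R) < ⟨q, hq⟩ := h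
        have h3 : (⟨q, hq⟩ : PrimeSpectrum R) < ⟨P, hP⟩ := hlt
        have h4 := two_le_height_of_chain h2 h3
        have h5 := le_trans h4 hht
        norm_num at h5
    have : a ∈ J.comap (algebraMap R (Localization.AtPrime q)) := by rw [heq]; exact haq
    exact this
  obtain ⟨k, hk⟩ := hnil
  rw [← map_pow] at hk
  obtain ⟨m, hm⟩ := (IsLocalization.map_eq_zero_iff q.primeCompl (Localization.AtPrime q) _).mp hk
  have hm0 : (m : R) = 0 := mem_nonZeroDivisors_iff_right.mp (pow_mem ha k) _ hm
  exact m.2 (hm0 ▸ q.zero_mem)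

lemma exists_mul_pow_mem_span {a r : R} (ha : a ∈ nonZeroDivisors R)
    {P : Ideal R} (hP : P.IsPrime) (haP : a ∈ P) (hrP : r ∈ P)
    (hht : Order.height (⟨P, hP⟩ : PrimeSpectrum R) ≤ 1) :
    ∃ t, t ∉ P ∧ ∃ k, t * r ^ k ∈ Ideal.span {a} := by
  have hrad : algebraMap R (Localization.AtPrime P) r ∈
      (Ideal.span {algebraMap R (Localization.AtPrime P) a}).radical := by
    rw [Ideal.radical_eq_sInf, Ideal.mem_sInf]
    rintro J ⟨hle, hJ⟩
    haveI hJ' : J.IsPrime := hJ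
    have hleP : J.comap (algebraMap R (Localization.AtPrime P)) ≤ P := by
      intro t ht
      by_contra htq
      have hunit : IsUnit (algebraMap R (Localization.AtPrime P) t) :=
        IsLocalization.map_units (Localization.AtPrime P) (⟨t, htq⟩ : P.primeCompl)
      exact hJ'.ne_top (J.eq_top_of_isUnit_mem ht hunit)
    have haq : a ∈ J.comap (algebraMap R (Localization.AtPrime P)) :=
      hle (Ideal.mem_span_singleton_self _)
    have heq : J.comap (algebraMap R (Localization.AtPrime P)) = P := by
      rcases eq_or_lt_of_le hleP with h | h
      · exact h
      · exact absurd (no_chain_below_regular ha (hJ'.comap _) hP haq h hht) not_false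
    have : r ∈ J.comap (algebraMap R (Localization.AtPrime P)) := by rw [heq]; exact hrP
    exact this
  obtain ⟨k, hk⟩ := Ideal.mem_radical_iff.mp hrad
  rw [← map_pow] at hk
  obtain ⟨c, hc⟩ := Ideal.mem_span_singleton'.mp hk
  obtain ⟨⟨c₀, t⟩, hct⟩ := IsLocalization.surj P.primeCompl c
  have heq2 : algebraMap R (Localization.AtPrime P) (a * c₀)
      = algebraMap R (Localization.AtPrime P) (r ^ k * t) := by
    rw [map_mul, map_mul, map_pow]
    calc algebraMap R (Localization.AtPrime P) a * algebraMap R (Localization.AtPrime P) c₀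
        = algebraMap R (Localization.AtPrime P) a * (c * algebraMap R (Localization.AtPrime P) t) := by
          rw [hct]
      _ = (c * algebraMap R (Localization.AtPrime P) a) * algebraMap R (Localization.AtPrime P) t := by
          ring
      _ = algebraMap R (Localization.AtPrime P) r ^ k * algebraMap R (Localization.AtPrime P) t := by
          rw [hc, map_pow]
  obtain ⟨u, hu⟩ := (IsLocalization.eq_iff_exists P.primeCompl (Localization.AtPrime P)).mp heq2
  refine ⟨(u : R) * t, ?_, k, ?_⟩
  · intro hmem
    rcases hP.mem_or_mem hmem with h | h
    · exact u.2 h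
    · exact t.2 h
  · rw [Ideal.mem_span_singleton']
    exact ⟨(u : R) * c₀, by linear_combination hu⟩

lemma not_depthGE_two {P : Ideal R} (hP : P.IsPrime) {u w : R}
    (hu : u ∈ nonZeroDivisors R)
    (hPw : ∀ p ∈ P, ∃ c, p * w = u * c)
    (hw : ∀ t, (∃ c, t * w = u * c) → t ∈ P) :
    ¬ DepthGE (Localization.AtPrime P) 2 := by
  rintro ⟨rs, hlen, hmem, hreg⟩
  obtain ⟨x, y, rfl⟩ := List.length_eq_two.mp hlen
  have hufA : algebraMap R (Localization.AtPrime P) u ∈ nonZeroDivisors (Localization.AtPrime P) :=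
    IsLocalization.nonZeroDivisors_le_comap P.primeCompl (Localization.AtPrime P) hu
  have hxm : x ∈ Ideal.map (algebraMap R (Localization.AtPrime P)) P := by
    rw [Localization.AtPrime.map_eq_maximalIdeal]
    exact hmem x List.mem_cons_self
  have hym : y ∈ Ideal.map (algebraMap R (Localization.AtPrime P)) P := by
    rw [Localization.AtPrime.map_eq_maximalIdeal]
    exact hmem y (List.mem_cons_of_mem x List.mem_cons_self)
  have hwmul : ∀ β ∈ Ideal.map (algebraMap R (Localization.AtPrime P)) P,
      ∃ c, β * algebraMap R (Localization.AtPrime P) w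
        = algebraMap R (Localization.AtPrime P) u * c := by
    intro β hβ
    have hβ' : β ∈ Ideal.span ((algebraMap R (Localization.AtPrime P)) '' P) := hβ
    clear hβ
    induction hβ' using Submodule.span_induction with
    | mem b hb =>
      obtain ⟨p₀, hp₀, rfl⟩ := hb
      obtain ⟨c, hc⟩ := hPw p₀ hp₀
      exact ⟨algebraMap R (Localization.AtPrime P) c, by rw [← map_mul, ← map_mul, hc]⟩
    | zero => exact ⟨0, by simp⟩
    | add b₁ b₂ hb₁ hb₂ ih₁ ih₂ =>
      obtain ⟨c₁, hc₁⟩ := ih₁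
      obtain ⟨c₂, hc₂⟩ := ih₂
      exact ⟨c₁ + c₂, by rw [add_mul, hc₁, hc₂, mul_add]⟩
    | smul z b hb ih =>
      obtain ⟨c, hc⟩ := ih
      exact ⟨z * c, by rw [smul_eq_mul, mul_assoc, hc]; ring⟩
  have hnotin : algebraMap R (Localization.AtPrime P) w
      ∉ Ideal.span {algebraMap R (Localization.AtPrime P) u} := by
    intro hmem'
    obtain ⟨c, hc⟩ := Ideal.mem_span_singleton'.mp hmem'
    obtain ⟨⟨c₀, t⟩, hct⟩ := IsLocalization.surj P.primeCompl c
    have heq2 : algebraMap R (Localization.AtPrime P) (w * t)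
        = algebraMap R (Localization.AtPrime P) (u * c₀) := by
      rw [map_mul, map_mul]
      calc algebraMap R (Localization.AtPrime P) w * algebraMap R (Localization.AtPrime P) t
          = (c * algebraMap R (Localization.AtPrime P) u) * algebraMap R (Localization.AtPrime P) t := by
            rw [hc]
        _ = algebraMap R (Localization.AtPrime P) u * (c * algebraMap R (Localization.AtPrime P) t) := by
            ring
        _ = algebraMap R (Localization.AtPrime P) u * algebraMap R (Localization.AtPrime P) c₀ := by
            rw [hct]
    obtain ⟨v, hv⟩ := (IsLocalization.eq_iff_exists P.primeCompl (Localization.AtPrime P)).mp heq2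
    have hvt : (v : R) * t ∈ P := hw _ ⟨(v : R) * c₀, by linear_combination hv⟩
    rcases hP.mem_or_mem hvt with h | h
    · exact v.2 h
    · exact t.2 h
  have hreg' := hreg.toIsWeaklyRegular
  rw [RingTheory.Sequence.isWeaklyRegular_cons_iff] at hreg'
  obtain ⟨hxreg, hrest⟩ := hreg'
  rw [RingTheory.Sequence.isWeaklyRegular_cons_iff] at hrest
  obtain ⟨hyreg, -⟩ := hrest
  obtain ⟨x₁, hx₁⟩ := hwmul x hxm
  obtain ⟨x₂, hx₂⟩ := hwmul y hym
  have hkey : y * x₁ = x * x₂ := by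
    have h0 : algebraMap R (Localization.AtPrime P) u * (y * x₁)
        = algebraMap R (Localization.AtPrime P) u * (x * x₂) := by
      linear_combination x * hx₂ - y * hx₁
    exact (mul_cancel_left_mem_nonZeroDivisors hufA).mp h0
  have hx₁mem : x₁ ∈ (x • ⊤ : Submodule (Localization.AtPrime P) (Localization.AtPrime P)) := by
    have h1 : y • (Submodule.Quotient.mk x₁ : QuotSMulTop x (Localization.AtPrime P))
        = y • (Submodule.Quotient.mk 0) := by
      rw [← Submodule.Quotient.mk_smul, ← Submodule.Quotient.mk_smul]
      rw [Submodule.Quotient.eq]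
      rw [smul_eq_mul, smul_eq_mul, mul_zero, sub_zero, hkey]
      exact Submodule.smul_mem_pointwise_smul x₂ x ⊤ trivial
    have h2 := hyreg h1
    have h3 : (Submodule.Quotient.mk x₁ : QuotSMulTop x (Localization.AtPrime P)) = 0 := by
      rw [h2]; rfl
    rwa [Submodule.Quotient.mk_eq_zero] at h3
  have hsub : (x • ⊤ : Submodule (Localization.AtPrime P) (Localization.AtPrime P))
      ≤ Ideal.span {x} := by
    rw [← Submodule.ideal_span_singleton_smul]
    refine Submodule.smul_le.mpr ?_
    intro r₀ hr₀ n _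
    rw [smul_eq_mul]
    exact Ideal.mul_mem_right n _ hr₀
  obtain ⟨x₃, hx₃⟩ := Ideal.mem_span_singleton'.mp (hsub hx₁mem)
  -- x₃ * x = x₁
  have h5 := hxreg (show x • (algebraMap R (Localization.AtPrime P) w
      - algebraMap R (Localization.AtPrime P) u * x₃) = x • (0 : Localization.AtPrime P) from by
    rw [smul_zero, smul_eq_mul, mul_sub, hx₁, ← hx₃]; ring)
  apply hnotin
  rw [Ideal.mem_span_singleton']
  exact ⟨x₃, by linear_combination -h5⟩
end AuxD

section AuxE
variable {R : Type*} [CommRing R]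

lemma ann_eq_colon_bot {M : Type*} [AddCommGroup M] [Module R M] (m : M) :
    (Submodule.span R {m}).annihilator = (⊥ : Submodule R M).colon {m} := by
  ext r
  rw [Submodule.mem_annihilator_span_singleton, Submodule.mem_colon_singleton, Submodule.mem_bot]

lemma keyE [IsNoetherianRing R] (hS : CondS R 2)
    {s : ℕ} (hs : 0 < s) {a r v : R} (ha : a ∈ nonZeroDivisors R)
    (hrv : r * v ∈ Ideal.span {a ^ s})
    (habs : ∀ t : R, (∃ k, t * r ^ k ∈ Ideal.span {a ^ s}) →
      t ^ s * v ∈ Ideal.span {a ^ s}) :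
    v ∈ Ideal.span {a ^ s} := by
  by_contra hv
  set I : Ideal R := Ideal.span {a ^ s} with hI
  set m : R ⧸ I := Submodule.Quotient.mk v with hm
  have hm0 : m ≠ 0 := by
    rw [hm, Ne, Submodule.Quotient.mk_eq_zero]; exact hv
  obtain ⟨P, hPassoc, hle⟩ := exists_le_isAssociatedPrime_of_isNoetherianRing R m hm0
  obtain ⟨hPrime, z, hz⟩ := isAssociatedPrime_iff.mp hPassoc
  have hrm : r • m = 0 := by
    rw [hm, ← Submodule.Quotient.mk_smul, smul_eq_mul, Submodule.Quotient.mk_eq_zero]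
    exact hrv
  have hrP : r ∈ P := hle ((ann_eq_colon_bot m).le ((Submodule.mem_annihilator_span_singleton m r).mpr hrm))
  have hasP : a ^ s ∈ P := by
    refine hle ((ann_eq_colon_bot m).le ((Submodule.mem_annihilator_span_singleton m _).mpr ?_))
    rw [hm, ← Submodule.Quotient.mk_smul, smul_eq_mul, Submodule.Quotient.mk_eq_zero]
    exact Ideal.mul_mem_right v _ (Ideal.mem_span_singleton_self _)
  obtain ⟨w, hwz⟩ := Submodule.Quotient.mk_surjective I z
  have hPw : ∀ p ∈ P, ∃ c, p * w = a ^ s * c := by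
    intro p hp
    have hpz : p • z = 0 := by
      rw [hz] at hp
      exact (Submodule.mem_annihilator_span_singleton z p).mp ((ann_eq_colon_bot z).ge hp)
    rw [← hwz, ← Submodule.Quotient.mk_smul, smul_eq_mul, Submodule.Quotient.mk_eq_zero] at hpz
    obtain ⟨c, hc⟩ := Ideal.mem_span_singleton'.mp hpz
    exact ⟨c, by linear_combination -hc⟩
  have hwP : ∀ t, (∃ c, t * w = a ^ s * c) → t ∈ P := by
    rintro t ⟨c, hc⟩
    have htz : t • z = 0 := by
      rw [← hwz, ← Submodule.Quotient.mk_smul, smul_eq_mul, Submodule.Quotient.mk_eq_zero]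
      exact Ideal.mem_span_singleton'.mpr ⟨c, by linear_combination -hc⟩
    rw [hz]
    exact (ann_eq_colon_bot z).le ((Submodule.mem_annihilator_span_singleton z t).mpr htz)
  have hht : Order.height (⟨P, hPrime⟩ : PrimeSpectrum R) ≤ 1 := by
    by_contra hcon
    have h2le : ((2 : ℕ) : ℕ∞) ≤ primeHt R P hPrime := by
      unfold primeHt
      have h2 := Order.add_one_le_of_lt (not_le.mp hcon)
      exact le_trans (by norm_num) h2
    have hdep := hS P hPrime 2 (le_min (by norm_num) h2le)
    exact not_depthGE_two hPrime (pow_mem ha s) hPw hwP hdep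
  obtain ⟨t, htP, k, htk⟩ := exists_mul_pow_mem_span (pow_mem ha s) hPrime hasP hrP hht
  have hts := habs t ⟨k, htk⟩
  have hann : t ^ s ∈ (Submodule.span R {m}).annihilator := by
    refine (Submodule.mem_annihilator_span_singleton m _).mpr ?_
    rw [hm, ← Submodule.Quotient.mk_smul, smul_eq_mul, Submodule.Quotient.mk_eq_zero]
    exact hts
  exact htP (hPrime.mem_of_pow_mem s (hle ((ann_eq_colon_bot m).le hann)))
end AuxE

/-- If a noetherian ring satisfies (G₀) and (S₂), `M` is a finitely generated torsion module
and `r` is a regular element of `R` which is `M`-regular, then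
`char_R(M) ∩ rR = r·char_R(M)`. -/
theorem char_inter_principal (R : Type*) [CommRing R] [IsNoetherianRing R]
    (hG : CondG0 R) (hS : CondS R 2)
    (M : Type*) [AddCommGroup M] [Module R M] [Module.Finite R M]
    (htors : ∃ a ∈ nonZeroDivisors R, ∀ m : M, a • m = 0)
    (r : R) (hr : r ∈ nonZeroDivisors R)
    (hreg : Function.Injective (fun m : M => r • m))
    (s : ℕ) (hs : 0 < s) (π : (Fin s → R) →ₗ[R] M) (hπ : Function.Surjective π) :
    charIdealAux R s (LinearMap.ker π) ⊓ Ideal.span {r}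
      = Ideal.span {r} * charIdealAux R s (LinearMap.ker π) := by
  classical
  obtain ⟨a, haR, haM⟩ := htors
  have haN : ∀ j, a • (Pi.single j 1 : Fin s → R) ∈ LinearMap.ker π := fun j => by
    rw [LinearMap.mem_ker, map_smul]
    exact haM _
  apply le_antisymm
  · intro x hx
    obtain ⟨hxI, hxr⟩ := Submodule.mem_inf.mp hx
    obtain ⟨y, hy⟩ := Ideal.mem_span_singleton'.mp hxr
    have hyI : y ∈ charIdealAux R s (LinearMap.ker π) := by
      apply div_sub_charIdeal haN haR
      intro g
      obtain ⟨w₀, hw₀⟩ := charIdeal_sub_div haN hxI g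
      have hrv : r * (y * (CmatN haN g).det) ∈ Ideal.span {a ^ s} := by
        rw [Ideal.mem_span_singleton']
        exact ⟨w₀, by linear_combination -hw₀ - (CmatN haN g).det * hy⟩
      have habs : ∀ t : R, (∃ k, t * r ^ k ∈ Ideal.span {a ^ s}) →
          t ^ s * (y * (CmatN haN g).det) ∈ Ideal.span {a ^ s} := by
        rintro t ⟨k, htk⟩
        obtain ⟨e, he⟩ := Ideal.mem_span_singleton'.mp htk
        have haMs : ∀ m : M, (a ^ s) • m = 0 := by
          intro m
          obtain ⟨s', rfl⟩ := Nat.exists_eq_succ_of_ne_zero hs.ne'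
          rw [pow_succ, mul_smul, haM, smul_zero]
        have hrk : ∀ m : M, (r ^ k) • (t • m) = 0 := by
          intro m
          rw [← mul_smul]
          have hrt : r ^ k * t = e * a ^ s := by linear_combination -he
          rw [hrt, mul_smul, haMs, smul_zero]
        have hzero : ∀ (n : ℕ) (m' : M), (r ^ n) • m' = 0 → m' = 0 := by
          intro n
          induction n with
          | zero => intro m' h; simpa using h
          | succ n ih =>
            intro m' h
            have h1 : (r ^ n) • (r • m') = 0 := by
              rw [← mul_smul, ← pow_succ]
              exact h
            have h2 := ih _ h1
            exact hreg (show (fun m : M => r • m) m' = (fun m : M => r • m) 0 by simpa using h2)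
        have hkill : ∀ m : M, t • m = 0 := fun m => hzero k (t • m) (hrk m)
        have htN : ∀ j, t • (Pi.single j 1 : Fin s → R) ∈ LinearMap.ker π := fun j => by
          rw [LinearMap.mem_ker, map_smul]; exact hkill _
        have hCG : ∀ i j, t * (CmatN haN g) i j
            = a * (g i ⟨t • (Pi.single j 1 : Fin s → R), htN j⟩) := by
          intro i j
          have hsub : t • (⟨a • (Pi.single j 1 : Fin s → R), haN j⟩ : LinearMap.ker π)
              = a • (⟨t • (Pi.single j 1 : Fin s → R), htN j⟩ : LinearMap.ker π) := by
            apply Subtype.ext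
            show t • (a • (Pi.single j 1 : Fin s → R)) = a • (t • (Pi.single j 1 : Fin s → R))
            rw [smul_comm]
          calc t * (CmatN haN g) i j
              = t • (g i ⟨a • (Pi.single j 1 : Fin s → R), haN j⟩) := rfl
            _ = g i (t • (⟨a • (Pi.single j 1 : Fin s → R), haN j⟩ : LinearMap.ker π)) :=
                (map_smul (g i) t _).symm
            _ = g i (a • (⟨t • (Pi.single j 1 : Fin s → R), htN j⟩ : LinearMap.ker π)) := by
                rw [hsub]
            _ = a * (g i ⟨t • (Pi.single j 1 : Fin s → R), htN j⟩) := by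
                rw [map_smul, smul_eq_mul]
        set G : Matrix (Fin s) (Fin s) R :=
          Matrix.of fun i j => g i ⟨t • (Pi.single j 1 : Fin s → R), htN j⟩ with hG2
        have e3 : t • (CmatN haN g) = a • G := by
          ext i j
          rw [Matrix.smul_apply, Matrix.smul_apply, smul_eq_mul, smul_eq_mul]
          exact hCG i j
        have hdet : t ^ s * (CmatN haN g).det = a ^ s * G.det := by
          have e1 : (t • (CmatN haN g)).det = t ^ s * (CmatN haN g).det := by
            rw [Matrix.det_smul, Fintype.card_fin]
          have e2 : (a • G).det = a ^ s * G.det := by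
            rw [Matrix.det_smul, Fintype.card_fin]
          rw [← e1, e3, e2]
        rw [Ideal.mem_span_singleton']
        exact ⟨y * G.det, by linear_combination -y * hdet⟩
      have hkey := keyE hS hs haR hrv habs
      obtain ⟨w₁, hw₁⟩ := Ideal.mem_span_singleton'.mp hkey
      exact ⟨w₁, by linear_combination -hw₁⟩
    have hx' : x = r * y := by rw [← hy]; ring
    rw [hx']
    exact Ideal.mul_mem_mul (Ideal.mem_span_singleton_self r) hyI
  · intro x hx
    have h2 := Ideal.mul_le_inf hx
    exact ⟨h2.2, h2.1⟩
end

section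
/- Let R be a noetherian commutative ring satisfying (G₀) and (S₂), let M be a finitely generated torsion R-module, and let r ∈ R be a regular element that is M-regular. Then for every prime ideal 𝔯 of R with ht(𝔯) ≤ 1 and r ∈ 𝔯, the localized module M ⊗_R R_𝔯 vanishes. -/
lemma not_mem_minimalPrimes_of_nonZeroDivisor {R : Type*} [CommRing R]
    {p : Ideal R} (hp : p ∈ minimalPrimes R) {a : R} (ha : a ∈ nonZeroDivisors R) :
    a ∉ p := by
  intro hap
  haveI : p.IsPrime := hp.1.1
  set L := Localization p.primeCompl
  have hmem : algebraMap R L a ∈ IsLocalRing.maximalIdeal L :=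
    (IsLocalization.AtPrime.to_map_mem_maximal_iff L p a).mpr hap
  have hnil : IsNilpotent (algebraMap R L a) :=
    haveI : Ring.KrullDimLE 0 L := .of_isLocalization p hp L
    Ring.KrullDimLE.isNilpotent_iff_mem_maximalIdeal.mpr hmem
  obtain ⟨n, hn⟩ := hnil
  rw [← map_pow] at hn
  obtain ⟨m, hm⟩ := (IsLocalization.map_eq_zero_iff p.primeCompl L (a ^ n)).mp hn
  have : (m : R) = 0 := (pow_mem ha n).2 _ hm
  exact m.2 (this ▸ p.zero_mem)

/-- If a noetherian ring satisfies (G₀) and (S₂), `M` is a finitely generated torsion module,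
and `r` is a regular element of `R` that is `M`-regular, then `M ⊗_R R_𝔯 = 0` for every prime
`𝔯` of height at most `1` containing `r`. -/
theorem localization_vanishes (R : Type*) [CommRing R] [IsNoetherianRing R]
    (hG : CondG0 R) (hS : CondS R 2)
    (M : Type*) [AddCommGroup M] [Module R M] [Module.Finite R M]
    (htors : ∃ a ∈ nonZeroDivisors R, ∀ m : M, a • m = 0)
    (r : R) (hr : r ∈ nonZeroDivisors R)
    (hreg : Function.Injective (fun m : M => r • m))
    (𝔯 : Ideal R) (h𝔯 : 𝔯.IsPrime) (hht : primeHt R 𝔯 h𝔯 ≤ 1) (hr𝔯 : r ∈ 𝔯) :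
    Subsingleton (LocalizedModule 𝔯.primeCompl M) := by
  classical
  obtain ⟨a, haR, haM⟩ := htors
  set J : Ideal R := Module.annihilator R M with hJdef
  have haJ : a ∈ J := Module.mem_annihilator.mpr haM
  -- Step A: any prime over J contained in 𝔯 equals 𝔯
  have keyA : ∀ q : Ideal R, q.IsPrime → J ≤ q → q ≤ 𝔯 → q = 𝔯 := by
    intro q hq hJq hq𝔯
    haveI := hq
    obtain ⟨p, hp, hpq⟩ := Ideal.exists_minimalPrimes_le (I := (⊥ : Ideal R)) (J := q) bot_le
    have hap : a ∉ p := not_mem_minimalPrimes_of_nonZeroDivisor hp haR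
    have hpltq : p < q := lt_of_le_of_ne hpq (fun h => hap (h ▸ hJq haJ))
    by_contra hne
    have hqlt𝔯 : q < 𝔯 := lt_of_le_of_ne hq𝔯 hne
    haveI : p.IsPrime := hp.1.1
    set P : PrimeSpectrum R := ⟨p, hp.1.1⟩
    set Q : PrimeSpectrum R := ⟨q, hq⟩
    set Rr : PrimeSpectrum R := ⟨𝔯, h𝔯⟩
    have hPQ : P < Q := hpltq
    have hQR : Q < Rr := hqlt𝔯
    have hht' : Order.height Rr ≤ 1 := hht
    have hQle : Order.height Q ≤ 1 := le_trans (Order.height_mono hQR.le) hht'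
    have h1 : Order.height P < Order.height Q :=
      Order.height_strictMono hPQ
        (lt_of_le_of_lt (le_trans (Order.height_mono hPQ.le) hQle) (by exact Ne.lt_top (by simp)))
    have h2 : Order.height Q < Order.height Rr :=
      Order.height_strictMono hQR (lt_of_le_of_lt hQle (by exact Ne.lt_top (by simp)))
    have hone : (1 : ℕ∞) ≤ Order.height Q :=
      ENat.one_le_iff_ne_zero.mpr (pos_iff_ne_zero.mp (lt_of_le_of_lt zero_le h1))
    exact absurd (lt_of_lt_of_le h2 hht') (not_lt.mpr hone)
  -- Step B: finiteness of minimal primes over J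
  have hTfin : J.minimalPrimes.Finite := by
    rw [Ideal.minimalPrimes_eq_comap]
    exact (minimalPrimes.finite_of_isNoetherianRing (R ⧸ J)).image _
  set F : Finset (Ideal R) := hTfin.toFinset.filter (fun q => ¬ q ≤ 𝔯) with hFdef
  have hex : ∀ q ∈ F, ∃ s, s ∈ q ∧ s ∉ 𝔯 := by
    intro q hq
    rw [hFdef, Finset.mem_filter] at hq
    exact SetLike.not_le_iff_exists.mp hq.2
  choose! f hf1 hf2 using hex
  set c : R := ∏ q ∈ F, f q with hcdef
  have hc𝔯 : c ∉ 𝔯 := by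
    intro hc
    obtain ⟨q, hqF, hq⟩ := (Ideal.IsPrime.prod_mem_iff).mp hc
    exact hf2 q hqF hq
  have hrc : r * c ∈ J.radical := by
    rw [← Ideal.sInf_minimalPrimes]
    rw [Submodule.mem_sInf]
    intro q hq
    by_cases hle : q ≤ 𝔯
    · have hq𝔯 : q = 𝔯 := keyA q hq.1.1 hq.1.2 hle
      rw [hq𝔯]
      exact Ideal.mul_mem_right _ _ hr𝔯
    · have hqF : q ∈ F := by
        rw [hFdef, Finset.mem_filter, hTfin.mem_toFinset]
        exact ⟨hq, hle⟩
      obtain ⟨d, hd⟩ := Finset.dvd_prod_of_mem f hqF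
      rw [hcdef, hd]
      exact Ideal.mul_mem_left _ _ (Ideal.mul_mem_right _ _ (hf1 q hqF))
  obtain ⟨n, hn⟩ := Ideal.mem_radical_iff.mp hrc
  rw [mul_pow] at hn
  have hrcancel : ∀ (k : ℕ) (x : M), r ^ k • x = 0 → x = 0 := by
    intro k
    induction k with
    | zero => intro x hx; simpa using hx
    | succ k ih =>
      intro x hx
      have h1 : r ^ k • (r • x) = 0 := by
        rw [smul_smul, ← pow_succ]; exact hx
      have h2 : r • x = 0 := ih _ h1
      exact hreg (show r • x = r • 0 by simpa using h2)
  have hkill : ∀ m : M, c ^ n • m = 0 := by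
    intro m
    have h0 : (r ^ n * c ^ n) • m = 0 := Module.mem_annihilator.mp hn m
    rw [mul_smul] at h0
    exact hrcancel n _ h0
  have hcn𝔯 : c ^ n ∉ 𝔯 := fun h => hc𝔯 (h𝔯.mem_of_pow_mem n h)
  constructor
  intro x y
  have hzero : ∀ z : LocalizedModule 𝔯.primeCompl M, z = 0 := by
    intro z
    induction z using LocalizedModule.induction_on with
    | _ m s =>
      rw [← LocalizedModule.zero_mk s, LocalizedModule.mk_eq]
      refine ⟨⟨c ^ n, hcn𝔯⟩, ?_⟩
      have : (⟨c ^ n, hcn𝔯⟩ : 𝔯.primeCompl) • (s • m) = 0 := by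
        rw [Submonoid.smul_def, Submonoid.smul_def, smul_smul, mul_comm, mul_smul, hkill m,
          smul_zero]
      rw [this]
      simp
  exact (hzero x).trans (hzero y).symm
end

section
/- Let R be a commutative ring, M a finitely generated R-module, and suppose there is an exact sequence of R-modules 0 → M → R^g → R^g → M' → 0 for some g ≥ 1 (where the middle map is given by multiplication by an R-linear endomorphism φ of R^g that is injective). Then char_R(M') = det(φ)·R. In particular, if V is a free module of finite rank g over a product of principal ideal domains and φ: V → V is an injective endomorphism, then char_R(coker φ) = det(φ)·R. -/
open Module

/-- If `φ : R^g → R^g` is an injective endomorphism (so `0 → R^g → R^g → M' → 0` with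
`M' = coker φ` is exact), then `char_R(M') = det(φ)·R`. -/
theorem char_coker_eq_det (R : Type*) [CommRing R] [IsNoetherianRing R]
    (g : ℕ) (hg : 0 < g)
    (φ : (Fin g → R) →ₗ[R] (Fin g → R)) (hφ : Function.Injective φ) :
    charIdealAux R g (LinearMap.range φ) = Ideal.span {LinearMap.det φ} := by
    classical
  set b := Pi.basisFun R (Fin g) with hb
  set d := b.dualBasis with hd
  set N := LinearMap.range φ with hN
  set e := LinearEquiv.ofInjective φ hφ with he
  -- `φ ∘ e.symm = N.subtype`
  have hsub : ∀ n : N, φ (e.symm n) = (n : Fin g → R) := by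
    intro n
    have : (e (e.symm n) : Fin g → R) = φ (e.symm n) := by
      simp [he, LinearEquiv.ofInjective_apply]
    rw [← this, LinearEquiv.apply_symm_apply]
  -- determinant computation
  have hB : d.det (fun i => (LinearMap.proj i : (Fin g → R) →ₗ[R] R).comp φ)
      = LinearMap.det φ := by
    rw [Basis.det_apply, ← LinearMap.det_toMatrix b φ,
      ← Matrix.det_transpose (LinearMap.toMatrix b b φ)]
    congr 1
    ext i j
    simp [Basis.toMatrix_apply, hd, LinearMap.toMatrix_apply, Matrix.transpose_apply, hb]
  apply le_antisymm
  · rintro x ⟨ψ, rfl⟩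
    set f : ExtBidual R (Fin g → R) g :=
      ψ.compLinearMap (e.symm.toLinearMap.dualMap) with hf
    have hfd : f = f d • d.det := AlternatingMap.eq_smul_basis_det d f
    have hx : (extEval R g) ((extBidualMap R g N.subtype) ψ)
        = f (fun i => (LinearMap.proj i : (Fin g → R) →ₗ[R] R).comp φ) := by
      show ψ (fun i => ((LinearMap.proj i : (Fin g → R) →ₗ[R] R).comp N.subtype))
        = ψ (fun i => (((LinearMap.proj i : (Fin g → R) →ₗ[R] R).comp φ).comp
            e.symm.toLinearMap))
      congr 1
      funext i
      ext n
      simp [hsub n]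
    rw [LinearMap.comp_apply, hx, hfd]
    simp only [AlternatingMap.smul_apply, smul_eq_mul, hB]
    exact Ideal.mem_span_singleton.mpr ⟨f d, mul_comm _ _⟩
  · rw [Ideal.span_le, Set.singleton_subset_iff]
    refine ⟨d.det.compLinearMap (e.toLinearMap.dualMap), ?_⟩
    rw [LinearMap.comp_apply]
    show d.det (fun i => (((LinearMap.proj i : (Fin g → R) →ₗ[R] R).comp N.subtype).comp
        e.toLinearMap)) = LinearMap.det φ
    rw [← hB]
    congr 1
end

section
/- Let R be a commutative ring, F a free R-module of finite rank r, and X a submodule of F. Then the image of the induced map ⋂^r_R X → ⋂^r_R F = R (where ⋂^r denotes the r-th exterior bi-dual) equals char_R(F/X), the characteristic ideal of the quotient module F/X. -/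
open Module

section Aux

open Function Equiv

variable {R : Type*} [CommRing R]

namespace CharQuotAux

section Funct
variable {M₁ M₂ M₃ : Type*} [AddCommGroup M₁] [Module R M₁]
  [AddCommGroup M₂] [Module R M₂] [AddCommGroup M₃] [Module R M₃]

lemma extBidualMap_comp (d : ℕ) (f : M₂ →ₗ[R] M₃) (g : M₁ →ₗ[R] M₂) :
    extBidualMap R d (f ∘ₗ g) = (extBidualMap R d f) ∘ₗ (extBidualMap R d g) :=
  LinearMap.ext fun φ => AlternatingMap.ext fun v => rfl

lemma extBidualMap_surjective (d : ℕ) (e : M₁ ≃ₗ[R] M₂) :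
    Function.Surjective (extBidualMap R d (e : M₁ →ₗ[R] M₂)) := by
  intro φ
  refine ⟨extBidualMap R d (e.symm : M₂ →ₗ[R] M₁) φ, ?_⟩
  rw [← LinearMap.comp_apply, ← extBidualMap_comp]
  have h : ((e : M₁ →ₗ[R] M₂) ∘ₗ (e.symm : M₂ →ₗ[R] M₁)) = LinearMap.id := by
    ext x; simp
  rw [h]
  refine AlternatingMap.ext fun v => ?_
  show φ (fun i => LinearMap.id.dualMap (v i)) = φ v
  simp [LinearMap.dualMap_id]

end Funct

/-- The composite `⋂^m P → ⋂^m R^m = R` induced by `ι : P → R^m`. -/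
noncomputable def Jmap {P : Type*} [AddCommGroup P] [Module R P] (m : ℕ)
    (ι : P →ₗ[R] (Fin m → R)) : ExtBidual R P m →ₗ[R] R :=
  (extEval R m) ∘ₗ (extBidualMap R m ι)

lemma range_Jmap_precomp {P P' : Type*} [AddCommGroup P] [Module R P]
    [AddCommGroup P'] [Module R P'] (m : ℕ) (e : P ≃ₗ[R] P') (ι : P' →ₗ[R] (Fin m → R)) :
    LinearMap.range (Jmap m (ι ∘ₗ (e : P →ₗ[R] P'))) = LinearMap.range (Jmap m ι) := by
  unfold Jmap
  rw [extBidualMap_comp, ← LinearMap.comp_assoc]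
  exact LinearMap.range_comp_of_range_eq_top _
    (LinearMap.range_eq_top.2 (extBidualMap_surjective m e))

lemma extEval_comp_endo (m : ℕ) (g : (Fin m → R) →ₗ[R] (Fin m → R)) :
    (extEval R m) ∘ₗ (extBidualMap R m g) = (LinearMap.det g) • extEval R m := by
  refine LinearMap.ext fun φ => ?_
  show φ (fun i => g.dualMap (LinearMap.proj i))
    = LinearMap.det g • φ (fun i => LinearMap.proj i)
  classical
  rw [smul_eq_mul]
  set b := (Pi.basisFun R (Fin m)).dualBasis with hbdef
  have hφ := φ.eq_smul_basis_det b
  conv_lhs => rw [hφ]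
  simp only [AlternatingMap.smul_apply, smul_eq_mul]
  have hmat : b.toMatrix (fun i => g.dualMap (LinearMap.proj i))
      = (LinearMap.toMatrix' g).transpose := by
    ext i j
    simp [hbdef, Basis.toMatrix_apply, Basis.dualBasis_repr, LinearMap.toMatrix'_apply,
      LinearMap.dualMap_apply, Matrix.transpose_apply, Pi.basisFun_apply]
  rw [Basis.det_apply, hmat, Matrix.det_transpose, LinearMap.det_toMatrix']
  have hb2 : φ ⇑b = φ fun i => LinearMap.proj i := by
    congr 1; funext i; ext x
    simp [hbdef]
  rw [hb2, mul_comm]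

lemma range_smul_unit {A : Type*} [AddCommGroup A] [Module R A] {c : R} (hc : IsUnit c)
    (F : A →ₗ[R] R) : LinearMap.range (c • F) = LinearMap.range F := by
  apply le_antisymm
  · rintro x ⟨a, rfl⟩
    exact ⟨c • a, by simp [mul_comm]⟩
  · rintro x ⟨a, rfl⟩
    obtain ⟨u, hu⟩ := hc
    refine ⟨((↑u⁻¹ : Rˣ) : R) • a, ?_⟩
    simp only [LinearMap.smul_apply, map_smul, smul_eq_mul, smul_smul]
    rw [← hu]
    simp

lemma range_Jmap_postcomp {P : Type*} [AddCommGroup P] [Module R P] (m : ℕ)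
    (g : (Fin m → R) ≃ₗ[R] (Fin m → R)) (ι : P →ₗ[R] (Fin m → R)) :
    LinearMap.range (Jmap m ((g : (Fin m → R) →ₗ[R] (Fin m → R)) ∘ₗ ι))
      = LinearMap.range (Jmap m ι) := by
  unfold Jmap
  rw [extBidualMap_comp, ← LinearMap.comp_assoc, extEval_comp_endo, LinearMap.smul_comp]
  exact range_smul_unit g.isUnit_det' _

/-- Splitting `R^m` as `R^s × R^r` along an index equivalence. -/
noncomputable def sumEquiv (s r m : ℕ) (t : Fin s ⊕ Fin r ≃ Fin m) :
    ((Fin s → R) × (Fin r → R)) ≃ₗ[R] (Fin m → R) where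
  toFun p := fun i => Sum.elim p.1 p.2 (t.symm i)
  invFun c := (fun j => c (t (Sum.inl j)), fun k => c (t (Sum.inr k)))
  map_add' p q := by funext i; rcases h : t.symm i with j | k <;> simp [h]
  map_smul' cc p := by funext i; rcases h : t.symm i with j | k <;> simp [h]
  left_inv p := by ext x <;> simp
  right_inv c := by
    funext i
    show Sum.elim _ _ (t.symm i) = c i
    rcases h : t.symm i with j | k <;> simp only [Sum.elim_inl, Sum.elim_inr] <;>
      rw [← h, Equiv.apply_symm_apply]

section Push
variable {P : Type*} [AddCommGroup P] [Module R P]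
variable {s r m : ℕ} (t : Fin s ⊕ Fin r ≃ Fin m)

/-- Pullback along the first projection on duals. -/
noncomputable def rho : Dual R P →ₗ[R] Dual R (P × (Fin r → R)) :=
  (LinearMap.fst R P (Fin r → R)).dualMap

/-- The standard dual vectors of the free factor. -/
noncomputable def cvec : Fin r → Dual R (P × (Fin r → R)) :=
  fun k => (LinearMap.snd R P (Fin r → R)).dualMap (LinearMap.proj k)

lemma bigfam_update [DecidableEq (Fin s)] (g : Fin s → Dual R P) (j : Fin s) (y : Dual R P) :
    (Sum.elim (fun j' => (rho (R := R) (P := P) (r := r)) (update g j y j')) cvec) ∘ t.symm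
      = update ((Sum.elim (fun j' => rho (g j')) cvec) ∘ t.symm) (t (Sum.inl j)) (rho y) := by
  funext i
  by_cases hi : i = t (Sum.inl j)
  · subst hi
    rw [update_self]
    simp [Equiv.symm_apply_apply]
  · rw [update_of_ne hi]
    simp only [comp_apply]
    rcases h : t.symm i with j' | k
    · have hj' : j' ≠ j := by
        rintro rfl
        exact hi (by rw [← h, Equiv.apply_symm_apply])
      simp [update_of_ne hj']
    · simp

/-- Restriction of an `m`-form on the dual of `P × R^r` to an `s`-form on the dual of `P`,
obtained by plugging the standard dual vectors of the free factor into the positions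
indexed by the second summand. -/
noncomputable def pushForm (φ : (Dual R (P × (Fin r → R))) [⋀^Fin m]→ₗ[R] R) :
    (Dual R P) [⋀^Fin s]→ₗ[R] R where
  toFun g := φ ((Sum.elim (fun j => rho (g j)) cvec) ∘ t.symm)
  map_update_add' g j x y := by
    simp only [bigfam_update t, map_add]
    exact φ.map_update_add _ _ _ _
  map_update_smul' g j c x := by
    simp only [bigfam_update t, map_smul]
    exact φ.map_update_smul _ _ _ _
  map_eq_zero_of_eq' g i j hg hij := by
    refine φ.map_eq_zero_of_eq _ (i := t (Sum.inl i)) (j := t (Sum.inl j)) ?_ ?_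
    · simp [Equiv.symm_apply_apply, hg]
    · exact fun h => hij (Sum.inl_injective (t.injective h))

end Push

open TensorProduct in
lemma domCoprod_sumElim {ιa ιb : Type*} [Fintype ιa] [Fintype ιb]
    [DecidableEq ιa] [DecidableEq ιb]
    {Mᵢ N₁ N₂ : Type*} [AddCommGroup Mᵢ] [Module R Mᵢ] [AddCommGroup N₁] [Module R N₁]
    [AddCommGroup N₂] [Module R N₂]
    (a : Mᵢ [⋀^ιa]→ₗ[R] N₁) (b : Mᵢ [⋀^ιb]→ₗ[R] N₂)
    (v₁ : ιa → Mᵢ) (v₂ : ιb → Mᵢ)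
    (ha : ∀ (w : ιa → Mᵢ) (i : ιa) (k : ιb), w i = v₂ k → a w = 0) :
    a.domCoprod b (Sum.elim v₁ v₂) = a v₁ ⊗ₜ[R] b v₂ := by
  rw [AlternatingMap.domCoprod_apply, MultilinearMap.sum_apply]
  have hsum : ∑ σ : Perm.ModSumCongr ιa ιb,
      (AlternatingMap.domCoprod.summand a b σ) (Sum.elim v₁ v₂)
      = (AlternatingMap.domCoprod.summand a b (Quotient.mk'' 1)) (Sum.elim v₁ v₂) := by
    apply Finset.sum_eq_single_of_mem _ (Finset.mem_univ _)
    intro σ _ hσ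
    induction σ using Quotient.inductionOn' with
    | h σ =>
      by_cases h : Set.MapsTo σ (Set.range Sum.inl) (Set.range Sum.inl)
      · exact absurd (Quotient.sound' (QuotientGroup.leftRel_apply.2 (by
          simpa using Perm.mem_sumCongrHom_range_of_perm_mapsTo_inl h))) hσ
      · rw [Set.MapsTo] at h
        push_neg at h
        obtain ⟨x, ⟨i, rfl⟩, hx⟩ := h
        obtain ⟨k, hk⟩ : ∃ k, σ (Sum.inl i) = Sum.inr k := by
          rcases hsi : σ (Sum.inl i) with j | k
          · exact absurd ⟨j, rfl⟩ (hsi ▸ hx)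
          · exact ⟨k, rfl⟩
        have hz : a (fun i' => Sum.elim v₁ v₂ (σ (Sum.inl i'))) = 0 :=
          ha _ i k (by rw [hk]; rfl)
        rw [AlternatingMap.domCoprod.summand_mk'']
        simp only [MultilinearMap.smul_apply, MultilinearMap.domDomCongr_apply,
          MultilinearMap.domCoprod_apply, AlternatingMap.coe_multilinearMap]
        rw [hz, TensorProduct.zero_tmul, smul_zero]
  rw [hsum, AlternatingMap.domCoprod.summand_mk'']
  simp only [Perm.sign_one, one_smul, MultilinearMap.domDomCongr_apply,
    MultilinearMap.domCoprod_apply, AlternatingMap.coe_multilinearMap, Perm.coe_one]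
  congr 1

open TensorProduct in
lemma range_Jmap_stab {P : Type*} [AddCommGroup P] [Module R P]
    (s r m : ℕ) (t : Fin s ⊕ Fin r ≃ Fin m) (ι : P →ₗ[R] (Fin s → R)) :
    LinearMap.range (Jmap m
        (((sumEquiv s r m t : ((Fin s → R) × (Fin r → R)) ≃ₗ[R] (Fin m → R)) :
          ((Fin s → R) × (Fin r → R)) →ₗ[R] (Fin m → R)) ∘ₗ
          (ι.prodMap (LinearMap.id : (Fin r → R) →ₗ[R] (Fin r → R)))))
      = LinearMap.range (Jmap s ι) := by
  classical
  set ι' : (P × (Fin r → R)) →ₗ[R] (Fin m → R) :=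
    ((sumEquiv s r m t : ((Fin s → R) × (Fin r → R)) ≃ₗ[R] (Fin m → R)) :
      ((Fin s → R) × (Fin r → R)) →ₗ[R] (Fin m → R)) ∘ₗ
      (ι.prodMap (LinearMap.id : (Fin r → R) →ₗ[R] (Fin r → R))) with hι'
  have hV : (fun i => ι'.dualMap (LinearMap.proj i))
      = (Sum.elim (fun j => rho (ι.dualMap (LinearMap.proj j))) cvec) ∘ ⇑t.symm := by
    funext i
    refine LinearMap.ext fun p => ?_
    show (sumEquiv s r m t ((ι.prodMap LinearMap.id) p) : Fin m → R) i
      = Sum.elim (fun j => rho (ι.dualMap (LinearMap.proj j))) cvec (t.symm i) p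
    rcases h : t.symm i with j | k <;>
      simp [sumEquiv, rho, cvec, h]
  apply le_antisymm
  · rintro x ⟨φ, rfl⟩
    refine ⟨pushForm t φ, ?_⟩
    show pushForm t φ (fun j => ι.dualMap (LinearMap.proj j))
      = φ (fun i => ι'.dualMap (LinearMap.proj i))
    rw [hV]
    rfl
  · rintro x ⟨ψ, rfl⟩
    set res1 : Dual R (P × (Fin r → R)) →ₗ[R] Dual R P :=
      (LinearMap.inl R P (Fin r → R)).dualMap with hres1
    set res2 : Dual R (P × (Fin r → R)) →ₗ[R] Dual R (Fin r → R) :=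
      (LinearMap.inr R P (Fin r → R)).dualMap with hres2
    set ω : (Dual R (Fin r → R)) [⋀^Fin r]→ₗ[R] R :=
      ((Pi.basisFun R (Fin r)).dualBasis).det with hω
    refine ⟨AlternatingMap.domDomCongr t
      ((TensorProduct.lid R R).toLinearMap.compAlternatingMap
        ((ψ.compLinearMap res1).domCoprod (ω.compLinearMap res2))), ?_⟩
    show (TensorProduct.lid R R)
        (((ψ.compLinearMap res1).domCoprod (ω.compLinearMap res2))
          ((fun i => ι'.dualMap (LinearMap.proj i)) ∘ ⇑t))
      = ψ (fun j => ι.dualMap (LinearMap.proj j))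
    have hVt : ((fun i => ι'.dualMap (LinearMap.proj i)) ∘ ⇑t)
        = Sum.elim (fun j => rho (ι.dualMap (LinearMap.proj j))) cvec := by
      rw [hV]
      funext z
      simp [Equiv.symm_apply_apply]
    have hker : ∀ (w : Fin s → Dual R (P × (Fin r → R))) (i : Fin s) (k : Fin r),
        w i = cvec k → (ψ.compLinearMap res1) w = 0 := by
      intro w i k hw
      show ψ (fun j => res1 (w j)) = 0
      refine AlternatingMap.map_coord_zero _ i ?_
      rw [hw]
      refine LinearMap.ext fun p => ?_
      simp [hres1, cvec]
    rw [hVt, domCoprod_sumElim _ _ _ _ hker]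
    · have h1 : (ψ.compLinearMap res1) (fun j => rho (ι.dualMap (LinearMap.proj j)))
          = ψ (fun j => ι.dualMap (LinearMap.proj j)) := by
        show ψ (fun j => res1 (rho (ι.dualMap (LinearMap.proj j)))) = _
        congr 1
      have h2 : (ω.compLinearMap res2) cvec = 1 := by
        show ω (fun k => res2 (cvec k)) = 1
        have : (fun k => res2 (cvec k)) = ⇑((Pi.basisFun R (Fin r)).dualBasis) := by
          funext k
          ext x
          simp [hres2, cvec, Basis.dualBasis_apply]
        rw [this, hω, Basis.det_self]
      rw [h1, h2, TensorProduct.lid_tmul, smul_eq_mul, mul_one]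

/-- A shear `(a, b) ↦ (a + β b, b)`. -/
noncomputable def shear1 {A B : Type*} [AddCommGroup A] [Module R A]
    [AddCommGroup B] [Module R B] (β : B →ₗ[R] A) : (A × B) ≃ₗ[R] (A × B) where
  toFun p := (p.1 + β p.2, p.2)
  invFun p := (p.1 - β p.2, p.2)
  map_add' p q := by ext <;> simp <;> abel
  map_smul' c p := by ext <;> simp
  left_inv p := by ext <;> simp
  right_inv p := by ext <;> simp

/-- A shear `(a, b) ↦ (a, b + α a)`. -/
noncomputable def shear2 {A B : Type*} [AddCommGroup A] [Module R A]
    [AddCommGroup B] [Module R B] (α : A →ₗ[R] B) : (A × B) ≃ₗ[R] (A × B) where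
  toFun p := (p.1, p.2 + α p.1)
  invFun p := (p.1, p.2 - α p.1)
  map_add' p q := by ext <;> simp <;> abel
  map_smul' c p := by ext <;> simp
  left_inv p := by ext <;> simp
  right_inv p := by ext <;> simp

end CharQuotAux
end Aux

section Glue
open CharQuotAux Function

variable {R : Type*} [CommRing R]

/-- If two injections into `R^m` have the same range, the corresponding bidual images agree. -/
lemma range_Jmap_congr {P₁ P₂ : Type*} [AddCommGroup P₁] [Module R P₁]
    [AddCommGroup P₂] [Module R P₂] (m : ℕ)
    (ι₁ : P₁ →ₗ[R] (Fin m → R)) (ι₂ : P₂ →ₗ[R] (Fin m → R))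
    (h₁ : Function.Injective ι₁) (h₂ : Function.Injective ι₂)
    (hr : LinearMap.range ι₁ = LinearMap.range ι₂) :
    LinearMap.range (Jmap m ι₁) = LinearMap.range (Jmap m ι₂) := by
  set u : P₁ ≃ₗ[R] P₂ :=
    ((LinearEquiv.ofInjective ι₁ h₁).trans (LinearEquiv.ofEq _ _ hr)).trans
      (LinearEquiv.ofInjective ι₂ h₂).symm with hu
  have key : ι₂ ∘ₗ (u : P₁ →ₗ[R] P₂) = ι₁ := by
    refine LinearMap.ext fun p => ?_
    show ι₂ (u p) = ι₁ p
    have h3 : ∀ y : LinearMap.range ι₂, ι₂ ((LinearEquiv.ofInjective ι₂ h₂).symm y) = ↑y := by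
      intro y
      conv_rhs => rw [← (LinearEquiv.ofInjective ι₂ h₂).apply_symm_apply y]
      rfl
    rw [hu]
    simp only [LinearEquiv.trans_apply]
    rw [h3]
    rfl
  rw [← key, range_Jmap_precomp]

/-- Peel off an automorphism of the source of a splitting equivalence. -/
lemma range_Jmap_peel {P Q : Type*} [AddCommGroup P] [Module R P]
    [AddCommGroup Q] [Module R Q] (m : ℕ) (e : Q ≃ₗ[R] (Fin m → R)) (G : Q ≃ₗ[R] Q)
    (ι₀ : P →ₗ[R] Q) :
    LinearMap.range (Jmap m ((e : Q →ₗ[R] (Fin m → R)) ∘ₗ ((G : Q →ₗ[R] Q) ∘ₗ ι₀)))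
      = LinearMap.range (Jmap m ((e : Q →ₗ[R] (Fin m → R)) ∘ₗ ι₀)) := by
  have h : (e : Q →ₗ[R] (Fin m → R)) ∘ₗ ((G : Q →ₗ[R] Q) ∘ₗ ι₀)
      = (((e.symm.trans G).trans e : (Fin m → R) ≃ₗ[R] (Fin m → R)) :
          (Fin m → R) →ₗ[R] (Fin m → R)) ∘ₗ ((e : Q →ₗ[R] (Fin m → R)) ∘ₗ ι₀) := by
    refine LinearMap.ext fun p => ?_
    simp [LinearEquiv.trans_apply]
  rw [h, range_Jmap_postcomp]

end Glue

/-- For a submodule `X` of the free module `F = R^r` of rank `r`, the image of the induced map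
`⋂^r_R X → ⋂^r_R F = R` equals the characteristic ideal of the quotient `F/X` (computed from
any presentation of `F/X`). -/
theorem char_quotient_eq_image (R : Type*) [CommRing R] [IsNoetherianRing R]
    (r : ℕ) (X : Submodule R (Fin r → R))
    (s : ℕ) (hs : 0 < s) (π : (Fin s → R) →ₗ[R] ((Fin r → R) ⧸ X))
    (hπ : Function.Surjective π) :
    charIdealAux R s (LinearMap.ker π) = charIdealAux R r X := by
  classical
  obtain ⟨β, hβ⟩ := Module.projective_lifting_property π X.mkQ hπ
  obtain ⟨α, hα⟩ := Module.projective_lifting_property X.mkQ π (Submodule.mkQ_surjective X)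
  set N := LinearMap.ker π with hN
  have hπβ : ∀ y, π (β y) = X.mkQ y := fun y => LinearMap.ext_iff.mp hβ y
  have hqα : ∀ y, X.mkQ (α y) = π y := fun y => LinearMap.ext_iff.mp hα y
  -- the two inclusions of the kernel of the big presentation
  set A : (N × (Fin r → R)) →ₗ[R] ((Fin s → R) × (Fin r → R)) :=
    ((CharQuotAux.shear1 β : ((Fin s → R) × (Fin r → R)) ≃ₗ[R] _) :
      ((Fin s → R) × (Fin r → R)) →ₗ[R] _) ∘ₗ
      (N.subtype.prodMap (LinearMap.id : (Fin r → R) →ₗ[R] (Fin r → R))) with hA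
  set B : ((Fin s → R) × X) →ₗ[R] ((Fin s → R) × (Fin r → R)) :=
    ((CharQuotAux.shear2 α : ((Fin s → R) × (Fin r → R)) ≃ₗ[R] _) :
      ((Fin s → R) × (Fin r → R)) →ₗ[R] _) ∘ₗ
      ((LinearMap.id : (Fin s → R) →ₗ[R] (Fin s → R)).prodMap X.subtype) with hB
  have hAapp : ∀ p : N × (Fin r → R), A p = ((p.1 : Fin s → R) + β p.2, p.2) := by
    intro p; rfl
  have hBapp : ∀ p : (Fin s → R) × X, B p = (p.1, (p.2 : Fin r → R) + α p.1) := by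
    intro p; rfl
  have hinjA : Function.Injective A := by
    intro p q h
    rw [hAapp, hAapp] at h
    obtain ⟨h1, h2⟩ := Prod.ext_iff.mp h
    have : (p.1 : Fin s → R) = (q.1 : Fin s → R) := by
      have := h1
      rw [h2] at this
      exact add_right_cancel this
    exact Prod.ext (Subtype.ext this) h2
  have hinjB : Function.Injective B := by
    intro p q h
    rw [hBapp, hBapp] at h
    obtain ⟨h1, h2⟩ := Prod.ext_iff.mp h
    have : (p.2 : Fin r → R) = (q.2 : Fin r → R) := by
      rw [h1] at h2
      exact add_right_cancel h2
    exact Prod.ext h1 (Subtype.ext this)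
  have hrangeAB : LinearMap.range A = LinearMap.range B := by
    apply le_antisymm
    · rintro _ ⟨⟨n, b⟩, rfl⟩
      have hmem : b - α ((n : Fin s → R) + β b) ∈ X := by
        rw [← Submodule.Quotient.mk_eq_zero X, ← Submodule.mkQ_apply]
        have hn : π (n : Fin s → R) = 0 := LinearMap.mem_ker.mp n.2
        rw [map_sub, hqα, map_add, hn, hπβ, zero_add, sub_self]
      refine ⟨((n : Fin s → R) + β b, ⟨b - α ((n : Fin s → R) + β b), hmem⟩), ?_⟩
      rw [hBapp, hAapp]
      refine Prod.ext rfl ?_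
      show b - α ((n : Fin s → R) + β b) + α ((n : Fin s → R) + β b) = b
      abel
    · rintro _ ⟨⟨a, x⟩, rfl⟩
      have hmem : a - β ((x : Fin r → R) + α a) ∈ N := by
        rw [hN, LinearMap.mem_ker, map_sub, hπβ, map_add, hqα]
        have hx : X.mkQ (x : Fin r → R) = 0 := by
          rw [Submodule.mkQ_apply, Submodule.Quotient.mk_eq_zero]
          exact x.2
        rw [hx, zero_add, sub_self]
      refine ⟨(⟨a - β ((x : Fin r → R) + α a), hmem⟩, (x : Fin r → R) + α a), ?_⟩
      rw [hAapp, hBapp]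
      refine Prod.ext ?_ rfl
      show a - β ((x : Fin r → R) + α a) + β ((x : Fin r → R) + α a) = a
      abel
  -- splitting equivalences
  set t₂ : Fin r ⊕ Fin s ≃ Fin (s + r) := (Equiv.sumComm (Fin r) (Fin s)).trans finSumFinEquiv
    with ht₂
  set e₁ := (CharQuotAux.sumEquiv s r (s + r) finSumFinEquiv :
    ((Fin s → R) × (Fin r → R)) ≃ₗ[R] (Fin (s + r) → R)) with he₁
  set e₂ := (CharQuotAux.sumEquiv r s (s + r) t₂ :
    ((Fin r → R) × (Fin s → R)) ≃ₗ[R] (Fin (s + r) → R)) with he₂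
  show LinearMap.range (CharQuotAux.Jmap s N.subtype)
      = LinearMap.range (CharQuotAux.Jmap r X.subtype)
  have step1 := (CharQuotAux.range_Jmap_stab s r (s + r) finSumFinEquiv N.subtype).symm
  have step2 := (range_Jmap_peel (s + r) e₁ (CharQuotAux.shear1 β)
    (N.subtype.prodMap (LinearMap.id : (Fin r → R) →ₗ[R] (Fin r → R)))).symm
  have step3 : LinearMap.range (CharQuotAux.Jmap (s + r)
        ((e₁ : ((Fin s → R) × (Fin r → R)) →ₗ[R] (Fin (s + r) → R)) ∘ₗ A))
      = LinearMap.range (CharQuotAux.Jmap (s + r)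
        ((e₁ : ((Fin s → R) × (Fin r → R)) →ₗ[R] (Fin (s + r) → R)) ∘ₗ B)) := by
    apply range_Jmap_congr
    · rw [LinearMap.coe_comp]
      exact e₁.injective.comp hinjA
    · rw [LinearMap.coe_comp]
      exact e₁.injective.comp hinjB
    · have h := hrangeAB
      rw [hA, hB] at h
      simp only [LinearMap.range_comp] at h
      rw [hA, hB]
      simp only [LinearMap.range_comp]
      rw [h]
  have step4 := range_Jmap_peel (s + r) e₁ (CharQuotAux.shear2 α)
    ((LinearMap.id : (Fin s → R) →ₗ[R] (Fin s → R)).prodMap X.subtype)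
  have hswap : (e₁ : ((Fin s → R) × (Fin r → R)) →ₗ[R] (Fin (s + r) → R)) ∘ₗ
        ((LinearMap.id : (Fin s → R) →ₗ[R] (Fin s → R)).prodMap X.subtype)
      = ((e₂ : ((Fin r → R) × (Fin s → R)) →ₗ[R] (Fin (s + r) → R)) ∘ₗ
          (X.subtype.prodMap (LinearMap.id : (Fin s → R) →ₗ[R] (Fin s → R)))) ∘ₗ
          ((LinearEquiv.prodComm R (Fin s → R) X :
            ((Fin s → R) × X) ≃ₗ[R] (X × (Fin s → R))) :
            ((Fin s → R) × X) →ₗ[R] (X × (Fin s → R))) := by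
    refine LinearMap.ext fun p => funext fun i => ?_
    show Sum.elim p.1 (X.subtype p.2) (finSumFinEquiv.symm i)
      = Sum.elim (X.subtype p.2) p.1 (t₂.symm i)
    rw [ht₂]
    rcases h : finSumFinEquiv.symm i with j | k <;>
      simp [h, Equiv.sumComm_symm, Equiv.sumComm_apply]
  have step5 := CharQuotAux.range_Jmap_precomp (s + r)
    ((LinearEquiv.prodComm R (Fin s → R) X :
      ((Fin s → R) × X) ≃ₗ[R] (X × (Fin s → R))))
    ((e₂ : ((Fin r → R) × (Fin s → R)) →ₗ[R] (Fin (s + r) → R)) ∘ₗ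
      (X.subtype.prodMap (LinearMap.id : (Fin s → R) →ₗ[R] (Fin s → R))))
  have step6 := CharQuotAux.range_Jmap_stab r s (s + r) t₂ X.subtype
  calc LinearMap.range (CharQuotAux.Jmap s N.subtype)
      = _ := step1
    _ = _ := step2
    _ = _ := step3
    _ = _ := step4
    _ = _ := by rw [hswap]; exact step5
    _ = _ := step6
end
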